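/- arXiv:2402.18666 — 6 statements merged into one kernel-verified Lean document; each statement's English description precedes it below -/
import Mathlib

section
/- Almost surely, (1/(m·p(m)))·tr(Ā_m A_mᵀ) − (1/(m·p(m)))·tr(A_m A_mᵀ) → 0 as m → ∞. -/
open MeasureTheory ProbabilityTheory Filter Matrix

lemma trace_mul_transpose_eq {m k : ℕ} (M N : Matrix (Fin m) (Fin k) ℝ) :
    (M * Nᵀ).trace = ∑ q : Fin m × Fin k, M q.1 q.2 * N q.1 q.2 := by
  simp [Matrix.trace, Matrix.diag, Matrix.mul_apply, Fintype.sum_prod_type,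
    Matrix.transpose_apply]

lemma second_moment {Ω : Type*} [MeasureSpace Ω] [IsProbabilityMeasure (ℙ : Measure Ω)]
    {ι : Type*} [Fintype ι] (f : ι → Ω → ℝ) (a : ι → ℝ)
    (hindep : ∀ i j, i ≠ j → IndepFun (f i) (f j) ℙ)
    (hint : ∀ i, Integrable (f i))
    (hsq : ∀ i, Integrable (fun ω => (f i ω) ^ 2))
    (hmean : ∀ i, ∫ ω, f i ω = 0)
    (hvar : ∀ i, ∫ ω, (f i ω) ^ 2 = 1) :
    ∫ ω, (∑ i, a i * f i ω) ^ 2 = ∑ i, (a i) ^ 2 := by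
  have hprod : ∀ i j : ι, Integrable (fun ω => f i ω * f j ω) := by
    intro i j
    by_cases h : i = j
    · subst h; simpa [sq] using hsq i
    · exact (hindep i j h).integrable_mul (hint i) (hint j)
  have hexp : ∀ ω, (∑ i, a i * f i ω) ^ 2
      = ∑ i, ∑ j, (a i * a j) * (f i ω * f j ω) := by
    intro ω
    rw [sq, Finset.sum_mul_sum]
    exact Finset.sum_congr rfl fun i _ => Finset.sum_congr rfl fun j _ => by ring
  calc ∫ ω, (∑ i, a i * f i ω) ^ 2
      = ∫ ω, ∑ i, ∑ j, (a i * a j) * (f i ω * f j ω) := by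
        exact integral_congr_ae (Filter.Eventually.of_forall fun ω => hexp ω)
    _ = ∑ i, ∑ j, ∫ ω, (a i * a j) * (f i ω * f j ω) := by
        rw [integral_finset_sum]
        · exact Finset.sum_congr rfl fun i _ => integral_finset_sum _
            (fun j _ => ((hprod i j).const_mul _))
        · exact fun i _ => integrable_finset_sum _ fun j _ => ((hprod i j).const_mul _)
    _ = ∑ i, (a i) ^ 2 := by
        refine Finset.sum_congr rfl fun i _ => ?_
        rw [Finset.sum_eq_single i]
        · rw [integral_const_mul _ _]
          have : ∫ ω, f i ω * f i ω = 1 := by simpa [sq] using hvar i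
          rw [this]; ring
        · intro j _ hji
          have h0 : integral ℙ (f i * f j) = 0 := by
            rw [(hindep i j (Ne.symm hji)).integral_mul_eq_mul_integral (hint i).aestronglyMeasurable (hint j).aestronglyMeasurable,
              hmean i, hmean j]; ring
          rw [integral_const_mul _ _]
          calc a i * a j * ∫ ω, f i ω * f j ω
              = a i * a j * integral ℙ (f i * f j) := rfl
            _ = 0 := by rw [h0]; ring
        · intro h; exact absurd (Finset.mem_univ i) h

lemma tendsto_ae_of_tsum_ne_top {Ω : Type*} [MeasureSpace Ω]
    (Y : ℕ → Ω → ℝ)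
    (h : ∀ k : ℕ, (∑' m, ℙ {ω | 1 / ((k : ℝ) + 1) ≤ |Y m ω|}) ≠ ⊤) :
    ∀ᵐ ω, Tendsto (fun m => Y m ω) atTop (nhds 0) := by
  have hae : ∀ k : ℕ, ∀ᵐ ω, ∀ᶠ m in atTop,
      ω ∉ {ω' | 1 / ((k : ℝ) + 1) ≤ |Y m ω'|} :=
    fun k => measure_setOf_frequently_eq_zero (h k)
  rw [← ae_all_iff] at hae
  filter_upwards [hae] with ω hω
  rw [NormedAddCommGroup.tendsto_nhds_zero]
  intro ε hε
  obtain ⟨k, hk⟩ := exists_nat_one_div_lt hε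
  filter_upwards [hω k] with m hm
  rw [Real.norm_eq_abs]
  exact lt_of_not_ge (fun hc => hm hc) |>.trans hk

/-- a.s. (1/(mp))·tr(Ā_m A_mᵀ) − (1/(mp))·tr(A_m A_mᵀ) → 0 as m → ∞. -/
theorem stmt2
    {Ω : Type*} [MeasureSpace Ω] [IsProbabilityMeasure (ℙ : Measure Ω)]
    (c : ℝ) (hc : 0 < c)
    (p : ℕ → ℕ)
    (hp : Tendsto (fun m : ℕ => (m : ℝ) / (p m : ℝ)) atTop (nhds c))
    (e : ℕ → ℕ → Ω → ℝ)
    (hmeas : ∀ i j, Measurable (e i j))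
    (hindep : iIndepFun (fun q : ℕ × ℕ => e q.1 q.2) ℙ)
    (hident : ∀ i j, IdentDistrib (e i j) (e 0 0) ℙ ℙ)
    (hint : ∀ i j, Integrable (e i j))
    (hsq : ∀ i j, Integrable (fun ω => (e i j ω) ^ 2))
    (hmean : ∀ i j, ∫ ω, e i j ω = 0)
    (hvar : ∀ i j, ∫ ω, (e i j ω) ^ 2 = 1)
    (hmom4 : ∀ i j, Integrable (fun ω => (e i j ω) ^ 4))
    (A : ∀ m : ℕ, Matrix (Fin m) (Fin (p m)) ℝ)
    (hA : ∃ C : ℝ, ∀ m : ℕ, (1 / (m * p m : ℝ)) * (A m * (A m)ᵀ).trace ≤ C)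
    (U : ∀ m : ℕ, Matrix (Fin m) (Fin (p m)) ℝ)
    (hU : ∀ m i j, U m i j = 1)
    (n : ℕ) (hn : 2 ≤ n) (σ : ℝ) (hσ : 0 < σ)
    (Abar : ∀ m : ℕ, Ω → Matrix (Fin m) (Fin (p m)) ℝ)
    (hAbar : ∀ m ω, Abar m ω =
      A m + (σ / Real.sqrt n) • Matrix.of fun i j => e i.val j.val ω) :
    ∀ᵐ ω, Tendsto
      (fun m : ℕ => (1 / (m * p m : ℝ)) * (Abar m ω * (A m)ᵀ).trace - (1 / (m * p m : ℝ)) * (A m * (A m)ᵀ).trace)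
      atTop (nhds 0) := by
  classical
  obtain ⟨C, hC⟩ := hA
  set κ : ℝ := σ / Real.sqrt n with hκdef
  set S : ∀ m : ℕ, Ω → ℝ :=
    fun m ω => ∑ q : Fin m × Fin (p m), A m q.1 q.2 * e q.1 q.2 ω with hSdef
  set Y : ℕ → Ω → ℝ := fun m ω => 1 / ((m : ℝ) * (p m : ℝ)) * κ * S m ω with hYdef
  -- trace of A Aᵀ is the sum of squares
  have htr : ∀ m, (A m * (A m)ᵀ).trace = ∑ q : Fin m × Fin (p m), (A m q.1 q.2) ^ 2 := by
    intro m
    rw [trace_mul_transpose_eq]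
    exact Finset.sum_congr rfl fun q _ => (sq (A m q.1 q.2)).symm
  -- reduction of the quantity of interest to Y
  have hred : ∀ m ω, (1 / (m * p m : ℝ)) * (Abar m ω * (A m)ᵀ).trace
      - (1 / (m * p m : ℝ)) * (A m * (A m)ᵀ).trace = Y m ω := by
    intro m ω
    rw [hAbar m ω, Matrix.add_mul, Matrix.trace_add, Matrix.smul_mul, Matrix.trace_smul,
      trace_mul_transpose_eq, trace_mul_transpose_eq]
    have hES : ∑ q : Fin m × Fin (p m),
        (Matrix.of fun (i : Fin m) (j : Fin (p m)) => e i.val j.val ω) q.1 q.2 * A m q.1 q.2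
        = S m ω := by
      exact Finset.sum_congr rfl fun q _ => by simp [hSdef, mul_comm]
    rw [hES]
    simp only [smul_eq_mul, hYdef]
    ring
  -- second moments
  have hmom : ∀ m, ∫ ω, (S m ω) ^ 2 = (A m * (A m)ᵀ).trace := by
    intro m
    rw [htr m, hSdef]
    refine second_moment (fun q : Fin m × Fin (p m) => e q.1 q.2)
      (fun q => A m q.1 q.2) ?_ (fun q => hint _ _) (fun q => hsq _ _)
      (fun q => hmean _ _) (fun q => hvar _ _)
    intro q r hqr
    have hne : ((q.1 : ℕ), (q.2 : ℕ)) ≠ ((r.1 : ℕ), (r.2 : ℕ)) := by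
      intro hcon
      apply hqr
      have h1 : (q.1 : ℕ) = r.1 := congrArg Prod.fst hcon
      have h2 : (q.2 : ℕ) = r.2 := congrArg Prod.snd hcon
      exact Prod.ext (Fin.ext h1) (Fin.ext h2)
    exact hindep.indepFun hne
  -- measurability and integrability of S and S²
  have hSmeas : ∀ m, Measurable (S m) := by
    intro m
    exact Finset.measurable_sum _ fun q _ => ((hmeas q.1 q.2).const_mul _)
  have hSsq_int : ∀ m, Integrable (fun ω => (S m ω) ^ 2) := by
    intro m
    refine (memLp_two_iff_integrable_sq (hSmeas m).aestronglyMeasurable).1 ?_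
    refine memLp_finset_sum _ fun q _ => ?_
    exact ((memLp_two_iff_integrable_sq (hmeas q.1 q.2).aestronglyMeasurable).2
      (hsq q.1 q.2)).const_mul _
  -- replace C by a nonnegative constant
  set C' : ℝ := max C 0 with hC'def
  have hC'0 : 0 ≤ C' := le_max_right _ _
  have hC' : ∀ m : ℕ, (1 / (m * p m : ℝ)) * (A m * (A m)ᵀ).trace ≤ C' :=
    fun m => (hC m).trans (le_max_left _ _)
  -- Chebyshev bound
  have cheb : ∀ (ε : ℝ), 0 < ε → ∀ m : ℕ, 0 < (m : ℝ) * (p m : ℝ) →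
      ℙ {ω | ε ≤ |Y m ω|} ≤
        ENNReal.ofReal ((κ ^ 2 * C') / (ε ^ 2 * ((m : ℝ) * (p m : ℝ)))) := by
    intro ε hε m hmp
    set t : ℝ := 1 / ((m : ℝ) * (p m : ℝ)) * κ with htdef
    have hYsq : (fun ω => (Y m ω) ^ 2) = fun ω => t ^ 2 * (S m ω) ^ 2 := by
      funext ω
      simp only [hYdef, htdef]
      ring
    have hYint : Integrable (fun ω => (Y m ω) ^ 2) := by
      rw [hYsq]; exact (hSsq_int m).const_mul _
    have hI : ∫ ω, (Y m ω) ^ 2 = t ^ 2 * (A m * (A m)ᵀ).trace := by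
      rw [hYsq, integral_const_mul _ _, hmom m]
    have htrle : (A m * (A m)ᵀ).trace ≤ C' * ((m : ℝ) * (p m : ℝ)) := by
      have h := hC' m
      rw [one_div, inv_mul_le_iff₀ hmp] at h
      linarith [h]
    have h2 : (∫ ω, (Y m ω) ^ 2) ≤ κ ^ 2 * C' / ((m : ℝ) * (p m : ℝ)) := by
      rw [hI]
      calc t ^ 2 * (A m * (A m)ᵀ).trace
          ≤ t ^ 2 * (C' * ((m : ℝ) * (p m : ℝ))) :=
            mul_le_mul_of_nonneg_left htrle (sq_nonneg t)
        _ = κ ^ 2 * C' / ((m : ℝ) * (p m : ℝ)) := by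
            rw [htdef]; field_simp
    have hmarkov := mul_meas_ge_le_integral_of_nonneg
      (ae_of_all _ fun ω => sq_nonneg (Y m ω)) hYint (ε ^ 2)
    have hsub : {ω | ε ≤ |Y m ω|} ⊆ {ω | ε ^ 2 ≤ (Y m ω) ^ 2} := by
      intro ω hω
      simp only [Set.mem_setOf_eq] at *
      calc ε ^ 2 ≤ |Y m ω| ^ 2 := pow_le_pow_left₀ hε.le hω 2
        _ = (Y m ω) ^ 2 := sq_abs _
    have h1 : (ℙ {ω | ε ^ 2 ≤ (Y m ω) ^ 2}).toReal ≤ (∫ ω, (Y m ω) ^ 2) / ε ^ 2 := by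
      rw [le_div_iff₀ (by positivity)]
      rw [mul_comm]; exact hmarkov
    calc ℙ {ω | ε ≤ |Y m ω|} ≤ ℙ {ω | ε ^ 2 ≤ (Y m ω) ^ 2} := measure_mono hsub
      _ = ENNReal.ofReal ((ℙ {ω | ε ^ 2 ≤ (Y m ω) ^ 2}).toReal) :=
          (ENNReal.ofReal_toReal (measure_ne_top _ _)).symm
      _ ≤ ENNReal.ofReal ((κ ^ 2 * C') / (ε ^ 2 * ((m : ℝ) * (p m : ℝ)))) := by
          apply ENNReal.ofReal_le_ofReal
          calc (ℙ {ω | ε ^ 2 ≤ (Y m ω) ^ 2}).toReal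
              ≤ (∫ ω, (Y m ω) ^ 2) / ε ^ 2 := h1
            _ ≤ (κ ^ 2 * C' / ((m : ℝ) * (p m : ℝ))) / ε ^ 2 :=
                div_le_div_of_nonneg_right h2 (by positivity)
            _ = (κ ^ 2 * C') / (ε ^ 2 * ((m : ℝ) * (p m : ℝ))) := by
                rw [div_div]; ring_nf
  -- eventual lower bound on m * p m
  have hev : ∀ᶠ m : ℕ in atTop,
      (c / 2 < (m : ℝ) / (p m : ℝ) ∧ (m : ℝ) / (p m : ℝ) < 2 * c) ∧ 1 ≤ m := by
    refine Eventually.and (Eventually.and ?_ ?_) (eventually_ge_atTop 1)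
    · exact hp.eventually (eventually_gt_nhds (by linarith))
    · exact hp.eventually (eventually_lt_nhds (by linarith))
  obtain ⟨N, hN⟩ := eventually_atTop.1 hev
  have hNfacts : ∀ m : ℕ, N ≤ m →
      0 < (m : ℝ) * (p m : ℝ) ∧ (m : ℝ) ^ 2 / (2 * c) ≤ (m : ℝ) * (p m : ℝ) := by
    intro m hm
    obtain ⟨⟨hlow, hhigh⟩, hm1⟩ := hN m hm
    have hmpos : (0 : ℝ) < m := by exact_mod_cast hm1
    have hppos : (0 : ℝ) < (p m : ℝ) := by
      rcases eq_or_lt_of_le (Nat.cast_nonneg (p m) : (0:ℝ) ≤ (p m : ℝ)) with h | h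
      · exfalso
        rw [← h, div_zero] at hlow
        linarith
      · exact h
    have hpm : (m : ℝ) < 2 * c * (p m : ℝ) := by
      rw [div_lt_iff₀ hppos] at hhigh
      linarith
    constructor
    · positivity
    · rw [div_le_iff₀ (by linarith : (0:ℝ) < 2 * c)]
      calc (m : ℝ) ^ 2 = (m : ℝ) * (m : ℝ) := sq (m : ℝ)
        _ ≤ (m : ℝ) * (2 * c * (p m : ℝ)) :=
            mul_le_mul_of_nonneg_left hpm.le hmpos.le
        _ = (m : ℝ) * (p m : ℝ) * (2 * c) := by ring
  -- complete convergence
  have hsum : ∀ k : ℕ, (∑' m, ℙ {ω | 1 / ((k : ℝ) + 1) ≤ |Y m ω|}) ≠ ⊤ := by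
    intro k
    set ε : ℝ := 1 / ((k : ℝ) + 1) with hεdef
    have hε : 0 < ε := by positivity
    set K : ℝ := 2 * c * (κ ^ 2 * C') / ε ^ 2 with hKdef
    have hK0 : 0 ≤ K := by
      have : (0:ℝ) ≤ κ ^ 2 * C' := mul_nonneg (sq_nonneg κ) hC'0
      positivity
    set g : ℕ → ℝ := fun m => K * (1 / (m : ℝ) ^ 2) with hgdef
    have hg0 : ∀ m, 0 ≤ g m := fun m => by positivity
    have hgsum : Summable g := (Real.summable_one_div_nat_pow.2 one_lt_two).mul_left K
    have hbound : ∀ m : ℕ, N ≤ m → ℙ {ω | ε ≤ |Y m ω|} ≤ ENNReal.ofReal (g m) := by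
      intro m hm
      obtain ⟨hmp, hmsq'⟩ := hNfacts m hm
      refine (cheb ε hε m hmp).trans (ENNReal.ofReal_le_ofReal ?_)
      have hm1 : 1 ≤ m := (hN m hm).2
      have hmpos : (0 : ℝ) < m := by exact_mod_cast hm1
      have hmsq : (0:ℝ) < (m : ℝ) ^ 2 / (2 * c) := by positivity
      have hε2 : (0:ℝ) < ε ^ 2 := by positivity
      calc κ ^ 2 * C' / (ε ^ 2 * ((m : ℝ) * (p m : ℝ)))
          = (κ ^ 2 * C' / ε ^ 2) / ((m : ℝ) * (p m : ℝ)) := by rw [div_div]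
        _ ≤ (κ ^ 2 * C' / ε ^ 2) / ((m : ℝ) ^ 2 / (2 * c)) :=
            div_le_div_of_nonneg_left
              (div_nonneg (mul_nonneg (sq_nonneg κ) hC'0) (sq_nonneg ε)) hmsq hmsq'
        _ = g m := by
            rw [hgdef, hKdef, div_div_eq_mul_div]
            field_simp
    rw [← Summable.sum_add_tsum_nat_add' (f := fun m => ℙ {ω | ε ≤ |Y m ω|}) (k := N)
      ENNReal.summable]
    refine ENNReal.add_ne_top.2 ⟨?_, ?_⟩
    · exact (ENNReal.sum_lt_top.2 fun i _ => measure_lt_top _ _).ne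
    · have hle : (∑' i : ℕ, ℙ {ω | ε ≤ |Y (i + N) ω|}) ≤ ∑' i : ℕ, ENNReal.ofReal (g (i + N)) :=
        ENNReal.tsum_le_tsum fun i => hbound (i + N) (Nat.le_add_left N i)
      have heq : (∑' i : ℕ, ENNReal.ofReal (g (i + N))) = ENNReal.ofReal (∑' i : ℕ, g (i + N)) :=
        (ENNReal.ofReal_tsum_of_nonneg (fun i => hg0 _) ((summable_nat_add_iff N).2 hgsum)).symm
      exact ne_top_of_le_ne_top (by rw [heq]; exact ENNReal.ofReal_ne_top) hle
  have hmain := tendsto_ae_of_tsum_ne_top Y hsum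
  filter_upwards [hmain] with ω hω
  have hfun : (fun m : ℕ => (1 / (m * p m : ℝ)) * (Abar m ω * (A m)ᵀ).trace
      - (1 / (m * p m : ℝ)) * (A m * (A m)ᵀ).trace) = fun m => Y m ω :=
    funext fun m => hred m ω
  rw [hfun]
  exact hω
end

section
/- Almost surely, (1/(m·p(m)))·tr(Ā_m Ā_mᵀ) − ((1/(m·p(m)))·tr(A_m A_mᵀ) + σ²/n) → 0 as m → ∞. -/
open MeasureTheory ProbabilityTheory Filter Matrix

/-- Borel-Cantelli + Chebyshev: centered L² variables with summable variance tend to 0 a.s. -/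
lemma aux_ae_tendsto {Ω : Type*} [MeasureSpace Ω] [IsProbabilityMeasure (ℙ : Measure Ω)]
    (X : ℕ → Ω → ℝ) (hX : ∀ m, MemLp (X m) 2 ℙ) (hmean : ∀ m, ∫ ω, X m ω = 0)
    (hvar : Summable (fun m => variance (X m) ℙ)) :
    ∀ᵐ ω, Tendsto (fun m => X m ω) atTop (nhds 0) := by
  have key : ∀ k : ℕ, ∀ᵐ ω, ∀ᶠ m in atTop, |X m ω| < 1/(k+1 : ℝ) := by
    intro k
    have hε : (0:ℝ) < 1/(k+1 : ℝ) := by positivity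
    set ε : ℝ := 1/(k+1 : ℝ) with hεdef
    set s : ℕ → Set Ω := fun m => {ω | ε ≤ |X m ω - ∫ ω', X m ω'|} with hs
    have hsum : (∑' m, ℙ (s m)) ≠ ⊤ := by
      have hle : ∀ m, ℙ (s m) ≤ ENNReal.ofReal (variance (X m) ℙ / ε ^ 2) := fun m =>
        meas_ge_le_variance_div_sq (hX m) hε
      have h1 : (∑' m, ℙ (s m)) ≤ ∑' m, ENNReal.ofReal (variance (X m) ℙ / ε ^ 2) :=
        ENNReal.tsum_le_tsum hle
      have h2 : (∑' m, ENNReal.ofReal (variance (X m) ℙ / ε ^ 2)) =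
          ENNReal.ofReal (∑' m, variance (X m) ℙ / ε ^ 2) :=
        (ENNReal.ofReal_tsum_of_nonneg
          (fun m => div_nonneg (variance_nonneg _ _) (sq_nonneg _))
          (hvar.div_const _)).symm
      exact ((h1.trans_eq h2).trans_lt ENNReal.ofReal_lt_top).ne
    filter_upwards [ae_eventually_notMem hsum] with ω hω
    filter_upwards [hω] with m hm
    simp only [hs, Set.mem_setOf_eq, hmean m, sub_zero, not_le] at hm
    exact hm
  rw [← ae_all_iff] at key
  filter_upwards [key] with ω hω
  rw [NormedAddCommGroup.tendsto_nhds_zero]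
  intro ε hε
  obtain ⟨k, hk⟩ := exists_nat_one_div_lt hε
  filter_upwards [hω k] with m hm
  rw [Real.norm_eq_abs]
  exact hm.trans hk

/-- summability from an eventual bound -/
lemma aux_summable {f g : ℕ → ℝ} (hf : ∀ m, 0 ≤ f m) (hg : Summable g)
    (h : ∀ᶠ m in atTop, f m ≤ g m) : Summable f := by
  obtain ⟨N, hN⟩ := eventually_atTop.1 h
  rw [← summable_nat_add_iff N]
  exact Summable.of_nonneg_of_le (fun m => hf _) (fun m => hN _ (Nat.le_add_left N m))
    ((summable_nat_add_iff N).2 hg)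

lemma aux_sum_fin_prod {k l : ℕ} (f : ℕ × ℕ → ℝ) :
    ∑ q ∈ Finset.range k ×ˢ Finset.range l, f q = ∑ i : Fin k, ∑ j : Fin l, f (i.val, j.val) := by
  rw [Finset.sum_product, ← Fin.sum_univ_eq_sum_range (fun i => ∑ j ∈ Finset.range l, f (i, j)) k]
  congr 1
  funext i
  exact (Fin.sum_univ_eq_sum_range (fun j => f (i.val, j)) l).symm

lemma aux_trace {k l : ℕ} (M : Matrix (Fin k) (Fin l) ℝ) :
    (M * Mᵀ).trace = ∑ i : Fin k, ∑ j : Fin l, M i j ^ 2 := by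
  simp [Matrix.trace, Matrix.diag, Matrix.mul_apply, sq]

lemma aux_variance_sum {Ω : Type*} [MeasureSpace Ω] [IsProbabilityMeasure (ℙ : Measure Ω)]
    (f : ℕ × ℕ → Ω → ℝ) (hf2 : ∀ q, MemLp (f q) 2 ℙ)
    (hfind : ∀ q q', q ≠ q' → IndepFun (f q) (f q') ℙ) (s : Finset (ℕ × ℕ)) :
    variance (fun ω => ∑ q ∈ s, f q ω) ℙ = ∑ q ∈ s, variance (f q) ℙ := by
  have h : (fun ω => ∑ q ∈ s, f q ω) = ∑ q ∈ s, f q := by funext ω; simp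
  rw [h, IndepFun.variance_sum (fun q _ => hf2 q) (fun q _ q' hq' hqq' => hfind q q' hqq')]

/-- a.s. (1/(mp))·tr(Ā_m Ā_mᵀ) − ((1/(mp))·tr(A_m A_mᵀ) + σ²/n) → 0 as m → ∞. -/
theorem stmt3
    {Ω : Type*} [MeasureSpace Ω] [IsProbabilityMeasure (ℙ : Measure Ω)]
    (c : ℝ) (hc : 0 < c)
    (p : ℕ → ℕ)
    (hp : Tendsto (fun m : ℕ => (m : ℝ) / (p m : ℝ)) atTop (nhds c))
    (e : ℕ → ℕ → Ω → ℝ)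
    (hmeas : ∀ i j, Measurable (e i j))
    (hindep : iIndepFun (fun q : ℕ × ℕ => e q.1 q.2) ℙ)
    (hident : ∀ i j, IdentDistrib (e i j) (e 0 0) ℙ ℙ)
    (hint : ∀ i j, Integrable (e i j))
    (hsq : ∀ i j, Integrable (fun ω => (e i j ω) ^ 2))
    (hmean : ∀ i j, ∫ ω, e i j ω = 0)
    (hvar : ∀ i j, ∫ ω, (e i j ω) ^ 2 = 1)
    (hmom4 : ∀ i j, Integrable (fun ω => (e i j ω) ^ 4))
    (A : ∀ m : ℕ, Matrix (Fin m) (Fin (p m)) ℝ)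
    (hA : ∃ C : ℝ, ∀ m : ℕ, (1 / (m * p m : ℝ)) * (A m * (A m)ᵀ).trace ≤ C)
    (U : ∀ m : ℕ, Matrix (Fin m) (Fin (p m)) ℝ)
    (hU : ∀ m i j, U m i j = 1)
    (n : ℕ) (hn : 2 ≤ n) (σ : ℝ) (hσ : 0 < σ)
    (Abar : ∀ m : ℕ, Ω → Matrix (Fin m) (Fin (p m)) ℝ)
    (hAbar : ∀ m ω, Abar m ω =
      A m + (σ / Real.sqrt n) • Matrix.of fun i j => e i.val j.val ω) :
    ∀ᵐ ω, Tendsto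
      (fun m : ℕ => (1 / (m * p m : ℝ)) * (Abar m ω * (Abar m ω)ᵀ).trace - ((1 / (m * p m : ℝ)) * (A m * (A m)ᵀ).trace + σ ^ 2 / n))
      atTop (nhds 0) := by
  classical
  obtain ⟨C, hC⟩ := hA
  have hn0 : (0:ℝ) < n := by
    have : (2:ℝ) ≤ n := by exact_mod_cast hn
    linarith
  set sc : ℝ := σ / Real.sqrt n with hscdef
  have hsc2 : sc ^ 2 = σ ^ 2 / n := by
    rw [hscdef, div_pow, Real.sq_sqrt hn0.le]
  -- index sets and coefficients
  set s : ℕ → Finset (ℕ × ℕ) := fun m => Finset.range m ×ˢ Finset.range (p m) with hsdef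
  set a : ∀ _ : ℕ, ℕ × ℕ → ℝ :=
    fun m q => if h : q.1 < m ∧ q.2 < p m then A m ⟨q.1, h.1⟩ ⟨q.2, h.2⟩ else 0 with hadef
  set Y : ℕ → Ω → ℝ :=
    fun m ω => (1/(m * p m : ℝ)) * ∑ q ∈ s m, a m q * e q.1 q.2 ω with hYdef
  set Z : ℕ → Ω → ℝ :=
    fun m ω => (1/(m * p m : ℝ)) * ∑ q ∈ s m, (e q.1 q.2 ω ^ 2 - 1) with hZdef
  -- basic L² facts
  have hL2e : ∀ i j, MemLp (e i j) 2 ℙ := fun i j =>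
    (memLp_two_iff_integrable_sq (hmeas i j).aestronglyMeasurable).2 (hsq i j)
  have hL2f : ∀ i j, MemLp (fun ω => e i j ω ^ 2 - 1) 2 ℙ := by
    intro i j
    refine (memLp_two_iff_integrable_sq
      (((hmeas i j).pow_const 2).sub measurable_const).aestronglyMeasurable).2 ?_
    have h : (fun ω => (e i j ω ^ 2 - 1) ^ 2)
        = fun ω => e i j ω ^ 4 - 2 * e i j ω ^ 2 + 1 := by funext ω; ring
    change Integrable (fun ω => (e i j ω ^ 2 - 1) ^ 2) ℙ
    rw [h]
    exact ((hmom4 i j).sub ((hsq i j).const_mul 2)).add (integrable_const 1)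
  have hVare : ∀ i j, variance (e i j) ℙ = 1 := by
    intro i j
    rw [variance_eq_sub (hL2e i j)]
    simp only [Pi.pow_apply]
    rw [hvar i j, hmean i j]
    norm_num
  set V : ℝ := variance (fun ω => e 0 0 ω ^ 2 - 1) ℙ with hVdef
  have hVf : ∀ i j, variance (fun ω => e i j ω ^ 2 - 1) ℙ = V := fun i j =>
    ((hident i j).comp ((measurable_id.pow_const 2).sub measurable_const)).variance_eq
  have hV0 : 0 ≤ V := variance_nonneg _ _
  -- eventually the dimensions behave
  have hgood : ∀ᶠ m : ℕ in atTop,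
      1 ≤ m ∧ 0 < p m ∧ ((m:ℝ)^2 / (2*c)) ≤ (m * p m : ℝ) := by
    have h1 := hp.eventually (eventually_gt_nhds (show c/2 < c by linarith))
    have h2 := hp.eventually (eventually_lt_nhds (show c < 2*c by linarith))
    filter_upwards [h1, h2, eventually_ge_atTop 1] with m hm1 hm2 hm3
    have hpm : 0 < p m := by
      rcases Nat.eq_zero_or_pos (p m) with h | h
      · rw [h] at hm1; norm_num at hm1; linarith
      · exact h
    refine ⟨hm3, hpm, ?_⟩
    have hpmR : (0:ℝ) < (p m : ℝ) := by exact_mod_cast hpm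
    have hm2' : (m:ℝ) < 2*c*(p m) := by
      rw [div_lt_iff₀ hpmR] at hm2; linarith
    rw [div_le_iff₀ (by linarith : (0:ℝ) < 2*c)]
    have hmR : (0:ℝ) ≤ (m:ℝ) := Nat.cast_nonneg m
    nlinarith
  -- summable envelope
  have hsummable_sq : Summable (fun m : ℕ => 1/(m:ℝ)^2) :=
    Real.summable_one_div_nat_pow.mpr one_lt_two
  have hone_div : ∀ᶠ m : ℕ in atTop, 1/((m:ℝ) * p m) ≤ 2*c * (1/(m:ℝ)^2) := by
    filter_upwards [hgood] with m ⟨hm1, hpm, hmp⟩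
    have hm2pos : (0:ℝ) < (m:ℝ)^2 := by
      have : (1:ℝ) ≤ (m:ℝ) := by exact_mod_cast hm1
      positivity
    have hq : (0:ℝ) < (m:ℝ)^2/(2*c) := by positivity
    have := one_div_le_one_div_of_le hq hmp
    calc 1/((m:ℝ) * p m) ≤ 1/((m:ℝ)^2/(2*c)) := this
      _ = 2*c * (1/(m:ℝ)^2) := by rw [one_div_div]; ring
  -- trace of A Aᵀ as a sum
  have htrA : ∀ m, (A m * (A m)ᵀ).trace = ∑ q ∈ s m, (a m q)^2 := by
    intro m
    rw [aux_trace, hsdef, aux_sum_fin_prod (fun q => a m q ^ 2)]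
    refine Finset.sum_congr rfl fun i _ => Finset.sum_congr rfl fun j _ => ?_
    rw [hadef]
    simp only
    rw [dif_pos ⟨i.isLt, j.isLt⟩]
  -- Y statistics
  have hmemY : ∀ m, MemLp (Y m) 2 ℙ := by
    intro m
    have h := (memLp_finset_sum' (s m)
      (fun q _ => (hL2e q.1 q.2).const_mul (a m q))).const_mul (1/(m * p m : ℝ))
    rw [hYdef]
    simpa using h
  have hmeanY : ∀ m, ∫ ω, Y m ω = 0 := by
    intro m
    rw [hYdef]
    simp only
    rw [integral_const_mul, integral_finset_sum _
      (fun q _ => (hint q.1 q.2).const_mul (a m q))]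
    have h : ∀ q ∈ s m, ∫ ω, a m q * e q.1 q.2 ω = 0 := by
      intro q _
      rw [integral_const_mul, hmean q.1 q.2, mul_zero]
    rw [Finset.sum_congr rfl h]
    simp
  have hvarY : ∀ m, variance (Y m) ℙ = (1/((m:ℝ) * p m))^2 * (A m * (A m)ᵀ).trace := by
    intro m
    rw [hYdef]
    simp only
    rw [variance_const_mul, aux_variance_sum _ (fun q => (hL2e q.1 q.2).const_mul (a m q))
      (fun q q' h => (hindep.indepFun h).comp (measurable_const_mul (a m q))
        (measurable_const_mul (a m q')))]
    rw [htrA m]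
    congr 1
    refine Finset.sum_congr rfl fun q _ => ?_
    rw [variance_const_mul, hVare q.1 q.2, mul_one]
  -- Z statistics
  have hmemZ : ∀ m, MemLp (Z m) 2 ℙ := by
    intro m
    have h := (memLp_finset_sum' (s m)
      (fun q _ => hL2f q.1 q.2)).const_mul (1/(m * p m : ℝ))
    rw [hZdef]
    simpa using h
  have hintf : ∀ i j : ℕ, Integrable (fun ω => e i j ω ^ 2 - 1) ℙ :=
    fun i j => (hsq i j).sub (integrable_const 1)
  have hmeanZ : ∀ m, ∫ ω, Z m ω = 0 := by
    intro m
    rw [hZdef]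
    simp only
    rw [integral_const_mul, integral_finset_sum _ (fun q _ => hintf q.1 q.2)]
    have h : ∀ q ∈ s m, ∫ ω, (e q.1 q.2 ω ^ 2 - 1) = 0 := by
      intro q _
      rw [integral_sub (hsq q.1 q.2) (integrable_const 1), hvar q.1 q.2]
      simp
    rw [Finset.sum_congr rfl h]
    simp
  have hcard : ∀ m, ((s m).card : ℝ) = (m : ℝ) * p m := by
    intro m
    rw [hsdef]
    simp [Finset.card_product]
  have hvarZ : ∀ m, variance (Z m) ℙ = (1/((m:ℝ) * p m))^2 * ((m:ℝ) * p m * V) := by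
    intro m
    rw [hZdef]
    simp only
    rw [variance_const_mul, aux_variance_sum _ (fun q => hL2f q.1 q.2)
      (fun q q' h => (hindep.indepFun h).comp
        ((measurable_id.pow_const 2).sub measurable_const)
        ((measurable_id.pow_const 2).sub measurable_const))]
    congr 1
    rw [Finset.sum_congr rfl (fun q _ => hVf q.1 q.2), Finset.sum_const,
      nsmul_eq_mul, hcard m]
  -- summability of variances
  have hsumY : Summable (fun m => variance (Y m) ℙ) := by
    refine aux_summable (fun m => variance_nonneg _ _)
      (hsummable_sq.mul_left (2*c*|C|)) ?_
    filter_upwards [hgood, hone_div] with m ⟨hm1, hpm, _⟩ hod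
    have hmp0 : (0:ℝ) < (m:ℝ) * p m := by
      have h1 : (0:ℝ) < (m:ℝ) := by exact_mod_cast hm1
      have h2 : (0:ℝ) < (p m : ℝ) := by exact_mod_cast hpm
      positivity
    rw [hvarY m]
    have hCb : (1/((m:ℝ) * p m)) * (A m * (A m)ᵀ).trace ≤ |C| := (hC m).trans (le_abs_self C)
    calc (1/((m:ℝ) * p m))^2 * (A m * (A m)ᵀ).trace
        = (1/((m:ℝ) * p m)) * ((1/((m:ℝ) * p m)) * (A m * (A m)ᵀ).trace) := by ring
      _ ≤ (1/((m:ℝ) * p m)) * |C| := by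
          apply mul_le_mul_of_nonneg_left hCb (by positivity)
      _ ≤ (2*c * (1/(m:ℝ)^2)) * |C| := by
          apply mul_le_mul_of_nonneg_right hod (abs_nonneg C)
      _ = 2*c*|C| * (1/(m:ℝ)^2) := by ring
  have hsumZ : Summable (fun m => variance (Z m) ℙ) := by
    refine aux_summable (fun m => variance_nonneg _ _)
      (hsummable_sq.mul_left (2*c*V)) ?_
    filter_upwards [hgood, hone_div] with m ⟨hm1, hpm, _⟩ hod
    have hmp0 : (0:ℝ) < (m:ℝ) * p m := by
      have h1 : (0:ℝ) < (m:ℝ) := by exact_mod_cast hm1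
      have h2 : (0:ℝ) < (p m : ℝ) := by exact_mod_cast hpm
      positivity
    rw [hvarZ m]
    have heq : (1/((m:ℝ) * p m))^2 * ((m:ℝ) * p m * V) = (1/((m:ℝ) * p m)) * V := by
      have hne := hmp0.ne'
      field_simp
    rw [heq]
    calc (1/((m:ℝ) * p m)) * V ≤ (2*c * (1/(m:ℝ)^2)) * V :=
          mul_le_mul_of_nonneg_right hod hV0
      _ = 2*c*V * (1/(m:ℝ)^2) := by ring
  -- a.s. limits
  have hYlim := aux_ae_tendsto Y hmemY hmeanY hsumY
  have hZlim := aux_ae_tendsto Z hmemZ hmeanZ hsumZ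
  -- algebraic key identity
  have hkey : ∀ m ω,
      (1/(m * p m : ℝ)) * (Abar m ω * (Abar m ω)ᵀ).trace
        - ((1/(m * p m : ℝ)) * (A m * (A m)ᵀ).trace + σ^2/n)
      = 2*sc*(Y m ω) + sc^2 * ((1/(m * p m : ℝ)) * (∑ q ∈ s m, e q.1 q.2 ω^2) - 1) := by
    intro m ω
    have hexp : (Abar m ω * (Abar m ω)ᵀ).trace
        = (A m * (A m)ᵀ).trace + 2*sc*(∑ q ∈ s m, a m q * e q.1 q.2 ω)
          + sc^2 * (∑ q ∈ s m, e q.1 q.2 ω^2) := by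
      rw [hAbar m ω, aux_trace, aux_trace, hsdef,
        aux_sum_fin_prod (fun q => a m q * e q.1 q.2 ω),
        aux_sum_fin_prod (fun q => e q.1 q.2 ω^2)]
      have ha' : ∀ (i : Fin m) (j : Fin (p m)), a m (i.val, j.val) = A m i j := by
        intro i j
        rw [hadef]
        simp only
        rw [dif_pos ⟨i.isLt, j.isLt⟩]
      simp only [Matrix.add_apply, Matrix.smul_apply, Matrix.of_apply, smul_eq_mul, ha']
      simp only [Finset.mul_sum, ← Finset.sum_add_distrib]
      refine Finset.sum_congr rfl fun i _ => Finset.sum_congr rfl fun j _ => ?_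
      ring
    rw [hexp, hYdef, ← hsc2]
    simp only
    ring
  -- conclusion
  filter_upwards [hYlim, hZlim] with ω hYω hZω
  have hlim : Tendsto (fun m => 2*sc*(Y m ω) + sc^2 * Z m ω) atTop (nhds 0) := by
    have h := (hYω.const_mul (2*sc)).add (hZω.const_mul (sc^2))
    simpa using h
  refine hlim.congr' ?_
  filter_upwards [hgood] with m ⟨hm1, hpm, _⟩
  have hmp0 : ((m:ℝ) * p m) ≠ 0 := by
    have h1 : (0:ℝ) < (m:ℝ) := by exact_mod_cast hm1
    have h2 : (0:ℝ) < (p m : ℝ) := by exact_mod_cast hpm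
    positivity
  have hZrw : Z m ω = (1/(m * p m : ℝ)) * (∑ q ∈ s m, e q.1 q.2 ω^2) - 1 := by
    rw [hZdef]
    simp only
    rw [Finset.sum_sub_distrib, Finset.sum_const, nsmul_eq_mul, mul_one, hcard m, mul_sub,
      one_div, inv_mul_cancel₀ hmp0]
  rw [hkey m ω, hZrw]
end

section
/- Almost surely, (1/((n−1)·m·p(m)))·Σ_{k=1}^n tr((Ã^k_m − Ā_m)(Ã^k_m − Ā_m)ᵀ) → σ² as m → ∞. -/
open MeasureTheory ProbabilityTheory Filter Matrix

/-- Pointwise algebraic identity for the centered sum of squares. -/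
lemma sumsq_center {n : ℕ} (hn : n ≠ 0) (v : Fin n → ℝ) :
    ∑ k : Fin n, (v k - (n : ℝ)⁻¹ * ∑ l : Fin n, v l) ^ 2
      = ∑ k : Fin n, (v k) ^ 2 - (n : ℝ)⁻¹ * (∑ k : Fin n, v k) ^ 2 := by
  have hn' : (n : ℝ) ≠ 0 := Nat.cast_ne_zero.mpr hn
  set S := ∑ l : Fin n, v l with hS
  have h1 : ∀ k : Fin n, (v k - (n : ℝ)⁻¹ * S) ^ 2
      = (v k) ^ 2 - 2 * (n : ℝ)⁻¹ * S * v k + (n : ℝ)⁻¹ ^ 2 * S ^ 2 := by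
    intro k; ring
  rw [Finset.sum_congr rfl fun k _ => h1 k]
  rw [Finset.sum_add_distrib, Finset.sum_sub_distrib, Finset.sum_const,
    Finset.card_univ, Fintype.card_fin, ← Finset.mul_sum, ← hS]
  field_simp
  have hnn : (n : ℝ) ^ 2 * (n : ℝ)⁻¹ ^ 2 = 1 := by rw [← mul_pow, mul_inv_cancel₀ hn', one_pow]
  linear_combination S ^ 2 * hnn

/-- Quadratic bound for the centered sum of squares. -/
lemma sumsq_center_sq_le {n : ℕ} (hn : n ≠ 0) (v : Fin n → ℝ) :
    (∑ k : Fin n, (v k - (n : ℝ)⁻¹ * ∑ l : Fin n, v l) ^ 2) ^ 2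
      ≤ 16 * n * ∑ k : Fin n, (v k) ^ 4 := by
  have hn' : (0 : ℝ) < n := by positivity
  set A := ∑ k : Fin n, (v k) ^ 2 with hA
  have hA0 : 0 ≤ A := Finset.sum_nonneg fun k _ => sq_nonneg _
  have hCS : (∑ l : Fin n, v l) ^ 2 ≤ (n : ℝ) * A := by
    simpa [Finset.card_univ] using
      (sq_sum_le_card_mul_sum_sq (s := (Finset.univ : Finset (Fin n))) (f := v))
  have hterm : ∀ k : Fin n, (v k - (n : ℝ)⁻¹ * ∑ l : Fin n, v l) ^ 2
      ≤ 2 * (v k) ^ 2 + 2 * ((n : ℝ)⁻¹ * ∑ l : Fin n, v l) ^ 2 := by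
    intro k
    have := sq_nonneg (v k + (n : ℝ)⁻¹ * ∑ l : Fin n, v l)
    nlinarith [sq_nonneg (v k - (n : ℝ)⁻¹ * ∑ l : Fin n, v l)]
  have hs2 : ((n : ℝ)⁻¹ * ∑ l : Fin n, v l) ^ 2 ≤ (n : ℝ)⁻¹ * A := by
    have : ((n : ℝ)⁻¹ * ∑ l : Fin n, v l) ^ 2
        = (n : ℝ)⁻¹ ^ 2 * (∑ l : Fin n, v l) ^ 2 := by ring
    rw [this]
    calc (n : ℝ)⁻¹ ^ 2 * (∑ l : Fin n, v l) ^ 2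
        ≤ (n : ℝ)⁻¹ ^ 2 * ((n : ℝ) * A) := by
          apply mul_le_mul_of_nonneg_left hCS (by positivity)
      _ = (n : ℝ)⁻¹ * A := by field_simp
  have hY4A : ∑ k : Fin n, (v k - (n : ℝ)⁻¹ * ∑ l : Fin n, v l) ^ 2 ≤ 4 * A := by
    calc ∑ k : Fin n, (v k - (n : ℝ)⁻¹ * ∑ l : Fin n, v l) ^ 2
        ≤ ∑ k : Fin n, (2 * (v k) ^ 2 + 2 * ((n : ℝ)⁻¹ * ∑ l : Fin n, v l) ^ 2) :=
          Finset.sum_le_sum fun k _ => hterm k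
      _ = 2 * A + (n : ℝ) * (2 * ((n : ℝ)⁻¹ * ∑ l : Fin n, v l) ^ 2) := by
          rw [Finset.sum_add_distrib, Finset.sum_const, Finset.card_univ, Fintype.card_fin,
            nsmul_eq_mul, hA, Finset.mul_sum]
          simp [Finset.mul_sum]
      _ ≤ 2 * A + (n : ℝ) * (2 * ((n : ℝ)⁻¹ * A)) := by
          have : 2 * ((n : ℝ)⁻¹ * ∑ l : Fin n, v l) ^ 2 ≤ 2 * ((n : ℝ)⁻¹ * A) := by linarith
          nlinarith
      _ = 4 * A := by field_simp; ring
  have hYnn : 0 ≤ ∑ k : Fin n, (v k - (n : ℝ)⁻¹ * ∑ l : Fin n, v l) ^ 2 :=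
    Finset.sum_nonneg fun k _ => sq_nonneg _
  have hsq : (∑ k : Fin n, (v k - (n : ℝ)⁻¹ * ∑ l : Fin n, v l) ^ 2) ^ 2 ≤ (4 * A) ^ 2 := by
    apply pow_le_pow_left₀ hYnn hY4A
  have hA2 : A ^ 2 ≤ (n : ℝ) * ∑ k : Fin n, (v k) ^ 4 := by
    have := sq_sum_le_card_mul_sum_sq (s := (Finset.univ : Finset (Fin n)))
      (f := fun k => (v k) ^ 2)
    simp only [Finset.card_univ, Fintype.card_fin] at this
    calc A ^ 2 ≤ (n : ℝ) * ∑ k : Fin n, ((v k) ^ 2) ^ 2 := this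
      _ = (n : ℝ) * ∑ k : Fin n, (v k) ^ 4 := by
          congr 1; exact Finset.sum_congr rfl fun k _ => by ring
  calc (∑ k : Fin n, (v k - (n : ℝ)⁻¹ * ∑ l : Fin n, v l) ^ 2) ^ 2
      ≤ (4 * A) ^ 2 := hsq
    _ = 16 * A ^ 2 := by ring
    _ ≤ 16 * ((n : ℝ) * ∑ k : Fin n, (v k) ^ 4) := by linarith
    _ = 16 * n * ∑ k : Fin n, (v k) ^ 4 := by ring

set_option maxHeartbeats 1000000 in
/-- Strong law of large numbers over rectangles `[m] × [p m]` with `m / p m → c > 0`,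
for pairwise independent random variables with common mean and uniformly bounded variance,
via Chebyshev and Borel–Cantelli. -/
lemma rect_slln {Ω : Type*} [MeasureSpace Ω] [IsProbabilityMeasure (ℙ : Measure Ω)]
    (c : ℝ) (hc : 0 < c) (p : ℕ → ℕ)
    (hp : Tendsto (fun m : ℕ => (m : ℝ) / (p m : ℝ)) atTop (nhds c))
    (Y : ℕ → ℕ → Ω → ℝ) (μY : ℝ)
    (hmem : ∀ i j, MemLp (Y i j) 2 ℙ)
    (hEY : ∀ i j, ∫ ω, Y i j ω = μY)
    (C : ℝ) (hC0 : 0 ≤ C)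
    (hvar : ∀ i j, variance (Y i j) ℙ ≤ C)
    (hind : ∀ i j i' j', (i, j) ≠ (i', j') → IndepFun (Y i j) (Y i' j') ℙ) :
    ∀ᵐ ω, Tendsto
      (fun m : ℕ => (∑ q : Fin m × Fin (p m), Y q.1.1 q.2.1 ω) / ((m : ℝ) * p m))
      atTop (nhds μY) := by
  classical
  have hYint : ∀ i j, Integrable (Y i j) ℙ := fun i j => (hmem i j).integrable one_le_two
  set T : ℕ → Ω → ℝ := fun m => ∑ q : Fin m × Fin (p m), Y q.1.1 q.2.1 with hT
  have hTapp : ∀ m ω, T m ω = ∑ q : Fin m × Fin (p m), Y q.1.1 q.2.1 ω := by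
    intro m ω; simp [hT]
  have hTmem : ∀ m, MemLp (T m) 2 ℙ := fun m => memLp_finset_sum' _ (fun q _ => hmem _ _)
  have hET : ∀ m, ∫ ω, T m ω = μY * ((m : ℝ) * (p m : ℝ)) := by
    intro m
    calc ∫ ω, T m ω = ∑ q : Fin m × Fin (p m), ∫ ω, Y q.1.1 q.2.1 ω := by
          simp_rw [hTapp]
          exact integral_finset_sum _ (fun q _ => hYint _ _)
      _ = μY * ((m : ℝ) * (p m : ℝ)) := by
          simp only [hEY, Finset.sum_const, Finset.card_univ, Fintype.card_prod,
            Fintype.card_fin, nsmul_eq_mul]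
          push_cast; ring
  have hVarT : ∀ m, variance (T m) ℙ ≤ C * ((m : ℝ) * (p m : ℝ)) := by
    intro m
    have hpair : Set.Pairwise ((Finset.univ : Finset (Fin m × Fin (p m))) : Set (Fin m × Fin (p m)))
        (fun q q' : Fin m × Fin (p m) => IndepFun (Y q.1.1 q.2.1) (Y q'.1.1 q'.2.1) ℙ) := by
      intro q _ q' hq' hqq'
      apply hind
      intro h
      apply hqq'
      have h1 : (q.1.1 : ℕ) = q'.1.1 := congrArg Prod.fst h
      have h2 : (q.2.1 : ℕ) = q'.2.1 := congrArg Prod.snd h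
      exact Prod.ext (Fin.ext h1) (Fin.ext h2)
    rw [hT, IndepFun.variance_sum (fun q _ => hmem _ _) hpair]
    calc ∑ q : Fin m × Fin (p m), variance (Y q.1.1 q.2.1) ℙ
        ≤ ∑ _q : Fin m × Fin (p m), C := Finset.sum_le_sum fun q _ => hvar _ _
      _ = C * ((m : ℝ) * (p m : ℝ)) := by
          simp only [Finset.sum_const, Finset.card_univ, Fintype.card_prod,
            Fintype.card_fin, nsmul_eq_mul]
          push_cast; ring
  set s : ℝ → ℕ → Set Ω := fun δ m =>
    if 0 < m * p m then
      {ω | δ * ((m : ℝ) * (p m : ℝ)) ≤ |T m ω - μY * ((m : ℝ) * (p m : ℝ))|} else ∅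
    with hs
  have hmeasb : ∀ δ : ℝ, 0 < δ → ∀ m,
      ℙ (s δ m) ≤ ENNReal.ofReal ((C / δ ^ 2) * (((m : ℝ) * (p m : ℝ))⁻¹)) := by
    intro δ hδ m
    by_cases hmp : 0 < m * p m
    · have hm0 : 0 < m := Nat.pos_of_ne_zero (by rintro rfl; simp at hmp)
      have hp0 : 0 < p m := Nat.pos_of_ne_zero (by intro h; rw [h] at hmp; simp at hmp)
      have hmpR : (0 : ℝ) < (m : ℝ) * (p m : ℝ) := by
        have : (0 : ℝ) < (m : ℝ) := by exact_mod_cast hm0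
        have : (0 : ℝ) < (p m : ℝ) := by exact_mod_cast hp0
        positivity
      have hcpos : 0 < δ * ((m : ℝ) * (p m : ℝ)) := by positivity
      have hcheb := meas_ge_le_variance_div_sq (hTmem m) hcpos
      rw [show (ℙ[T m] : ℝ) = μY * ((m : ℝ) * (p m : ℝ)) from hET m] at hcheb
      have hsm : s δ m = {ω | δ * ((m : ℝ) * (p m : ℝ))
          ≤ |T m ω - μY * ((m : ℝ) * (p m : ℝ))|} := by
        rw [hs]; simp [hmp]
      rw [hsm]
      refine le_trans hcheb (ENNReal.ofReal_le_ofReal ?_)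
      rw [div_le_iff₀ (by positivity)]
      have hkey : (C / δ ^ 2) * (((m : ℝ) * (p m : ℝ))⁻¹) * (δ * ((m : ℝ) * (p m : ℝ))) ^ 2
          = C * ((m : ℝ) * (p m : ℝ)) := by
        field_simp
      rw [hkey]
      exact hVarT m
    · have hsm : s δ m = ∅ := by rw [hs]; simp [hmp]
      rw [hsm]
      simp
  have hev : ∀ᶠ m : ℕ in atTop, (m : ℝ) ≤ (c + 1) * (p m : ℝ) ∧ 0 < p m := by
    have h1 : ∀ᶠ m : ℕ in atTop, (m : ℝ) / (p m : ℝ) ∈ Set.Ioo (c / 2) (c + 1) :=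
      hp (Ioo_mem_nhds (by linarith) (by linarith))
    filter_upwards [h1] with m hm
    have hpm : (0 : ℝ) < (p m : ℝ) := by
      by_contra h
      push_neg at h
      have hp0 : (p m : ℝ) = 0 := le_antisymm h (by positivity)
      rw [hp0, div_zero] at hm
      exact absurd hm.1 (by linarith)
    constructor
    · have h2 := hm.2
      rw [Set.mem_Ioo] at hm
      have := hm.2
      rw [div_lt_iff₀ hpm] at this
      nlinarith
    · exact_mod_cast hpm
  have hg : ∀ δ : ℝ, 0 < δ →
      Summable (fun m : ℕ => (C / δ ^ 2) * (((m : ℝ) * (p m : ℝ))⁻¹)) := by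
    intro δ hδ
    obtain ⟨M, hM⟩ := eventually_atTop.1 hev
    rw [← summable_nat_add_iff (M + 1)]
    have hbase : Summable (fun m : ℕ => (C / δ ^ 2) * (c + 1) * (1 / ((m + (M + 1) : ℕ) : ℝ) ^ 2)) := by
      apply Summable.mul_left
      exact (summable_nat_add_iff (M + 1)).2 (Real.summable_one_div_nat_pow.2 one_lt_two)
    apply Summable.of_nonneg_of_le _ _ hbase
    · intro m
      have h0 : (0 : ℝ) ≤ ((((m + (M + 1) : ℕ)) : ℝ) * ((p (m + (M + 1)) : ℝ)))⁻¹ := by positivity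
      have := div_nonneg hC0 (sq_nonneg δ)
      positivity
    · intro m
      set N : ℕ := m + (M + 1) with hN
      have hNM : N ≥ M := by omega
      obtain ⟨hle, hppos⟩ := hM N hNM
      have hN1 : (1 : ℝ) ≤ (N : ℝ) := by
        have : 1 ≤ N := by omega
        exact_mod_cast this
      have hpR : (0 : ℝ) < (p N : ℝ) := by exact_mod_cast hppos
      have hNR : (0 : ℝ) < (N : ℝ) := by linarith
      have hc1 : (0 : ℝ) < c + 1 := by linarith
      have hlow : (N : ℝ) ^ 2 / (c + 1) ≤ (N : ℝ) * (p N : ℝ) := by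
        rw [div_le_iff₀ hc1]
        calc (N : ℝ) ^ 2 = (N : ℝ) * (N : ℝ) := sq (N : ℝ) ▸ by ring
          _ ≤ (N : ℝ) * ((c + 1) * (p N : ℝ)) := by nlinarith
          _ = (N : ℝ) * (p N : ℝ) * (c + 1) := by ring
      have hinv : ((N : ℝ) * (p N : ℝ))⁻¹ ≤ (c + 1) * (1 / (N : ℝ) ^ 2) := by
        have h1 : ((N : ℝ) * (p N : ℝ))⁻¹ ≤ ((N : ℝ) ^ 2 / (c + 1))⁻¹ :=
          inv_anti₀ (by positivity) hlow
        calc ((N : ℝ) * (p N : ℝ))⁻¹ ≤ ((N : ℝ) ^ 2 / (c + 1))⁻¹ := h1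
          _ = (c + 1) * (1 / (N : ℝ) ^ 2) := by
            rw [inv_div]
            ring
      calc (C / δ ^ 2) * (((N : ℝ) * (p N : ℝ))⁻¹)
          ≤ (C / δ ^ 2) * ((c + 1) * (1 / (N : ℝ) ^ 2)) :=
            mul_le_mul_of_nonneg_left hinv (div_nonneg hC0 (sq_nonneg δ))
        _ = (C / δ ^ 2) * (c + 1) * (1 / (N : ℝ) ^ 2) := by ring
  have hBC : ∀ δ : ℝ, 0 < δ → ∀ᵐ ω, ∀ᶠ m in atTop, ω ∉ s δ m := by
    intro δ hδ
    apply ae_eventually_notMem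
    have hsum := hg δ hδ
    have hnn : ∀ m : ℕ, 0 ≤ (C / δ ^ 2) * (((m : ℝ) * (p m : ℝ))⁻¹) := by
      intro m
      have h0 : (0 : ℝ) ≤ (((m : ℝ)) * ((p m : ℝ)))⁻¹ := by positivity
      exact mul_nonneg (div_nonneg hC0 (sq_nonneg δ)) h0
    have hle : (∑' m : ℕ, ℙ (s δ m))
        ≤ ∑' m : ℕ, ENNReal.ofReal ((C / δ ^ 2) * (((m : ℝ) * (p m : ℝ))⁻¹)) :=
      ENNReal.tsum_le_tsum (hmeasb δ hδ)
    rw [← ENNReal.ofReal_tsum_of_nonneg hnn hsum] at hle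
    exact ne_top_of_le_ne_top ENNReal.ofReal_ne_top hle
  have hae : ∀ᵐ ω, ∀ K : ℕ, ∀ᶠ m in atTop, ω ∉ s (1 / ((K : ℝ) + 1)) m :=
    ae_all_iff.2 fun K => hBC _ (by positivity)
  have hmp_ev : ∀ᶠ m : ℕ in atTop, 0 < m * p m := by
    filter_upwards [hev, eventually_ge_atTop 1] with m hm hm1
    exact Nat.mul_pos hm1 hm.2
  filter_upwards [hae] with ω hω
  rw [Metric.tendsto_atTop]
  intro ε hε
  obtain ⟨K, hK⟩ := exists_nat_one_div_lt hε
  obtain ⟨N, hN⟩ := eventually_atTop.1 ((hω K).and hmp_ev)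
  refine ⟨N, fun m hm => ?_⟩
  obtain ⟨h1, h2⟩ := hN m hm
  have hm0 : 0 < m := Nat.pos_of_ne_zero (by rintro rfl; simp at h2)
  have hp0 : 0 < p m := Nat.pos_of_ne_zero (by intro h; rw [h] at h2; simp at h2)
  have hmpR : (0 : ℝ) < (m : ℝ) * (p m : ℝ) := by
    have hmr : (0 : ℝ) < (m : ℝ) := by exact_mod_cast hm0
    have hpr : (0 : ℝ) < (p m : ℝ) := by exact_mod_cast hp0
    positivity
  rw [hs] at h1
  simp only [if_pos h2] at h1
  have h1' : |T m ω - μY * ((m : ℝ) * (p m : ℝ))|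
      < (1 / ((K : ℝ) + 1)) * ((m : ℝ) * (p m : ℝ)) := by
    by_contra hcon
    push_neg at hcon
    exact h1 hcon
  rw [Real.dist_eq]
  have heq : (∑ q : Fin m × Fin (p m), Y q.1.1 q.2.1 ω) = T m ω := (hTapp m ω).symm
  rw [heq]
  have habs : |T m ω / ((m : ℝ) * (p m : ℝ)) - μY|
      = |T m ω - μY * ((m : ℝ) * (p m : ℝ))| / ((m : ℝ) * (p m : ℝ)) := by
    have hsub : T m ω / ((m : ℝ) * (p m : ℝ)) - μY
        = (T m ω - μY * ((m : ℝ) * (p m : ℝ))) / ((m : ℝ) * (p m : ℝ)) := by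
      field_simp
    rw [hsub, abs_div, abs_of_pos hmpR]
  rw [habs, div_lt_iff₀ hmpR]
  calc |T m ω - μY * ((m : ℝ) * (p m : ℝ))|
      < (1 / ((K : ℝ) + 1)) * ((m : ℝ) * (p m : ℝ)) := h1'
    _ ≤ ε * ((m : ℝ) * (p m : ℝ)) := by
        apply mul_le_mul_of_nonneg_right (le_of_lt hK) (le_of_lt hmpR)

/-- the sample variance estimator is strongly consistent: almost surely
`(1/((n−1)·m·p(m))) Σ_{k=1}^n tr((Ã^k_m − Ā_m)(Ã^k_m − Ā_m)ᵀ) → σ²` as `m → ∞`. -/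
theorem stmt4
    {Ω : Type*} [MeasureSpace Ω] [IsProbabilityMeasure (ℙ : Measure Ω)]
    (c : ℝ) (hc : 0 < c)
    (p : ℕ → ℕ)
    (hp : Tendsto (fun m : ℕ => (m : ℝ) / (p m : ℝ)) atTop (nhds c))
    (n : ℕ) (hn : 2 ≤ n) (σ : ℝ) (hσ : 0 < σ)
    (e : Fin n → ℕ → ℕ → Ω → ℝ)
    (hmeas : ∀ k i j, Measurable (e k i j))
    (hindep : iIndepFun
      (fun q : Fin n × ℕ × ℕ => e q.1 q.2.1 q.2.2) ℙ)
    (hident : ∀ k i j, IdentDistrib (e k i j) (e k 0 0) ℙ ℙ)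
    (hint : ∀ k i j, Integrable (e k i j))
    (hsq : ∀ k i j, Integrable (fun ω => (e k i j ω) ^ 2))
    (hmean : ∀ k i j, ∫ ω, e k i j ω = 0)
    (hvar : ∀ k i j, ∫ ω, (e k i j ω) ^ 2 = 1)
    (hmom4 : ∀ k i j, Integrable (fun ω => (e k i j ω) ^ 4))
    (A : ∀ m : ℕ, Matrix (Fin m) (Fin (p m)) ℝ)
    (hA : ∃ C : ℝ, ∀ m : ℕ, (1 / (m * p m : ℝ)) * (A m * (A m)ᵀ).trace ≤ C)
    (U : ∀ m : ℕ, Matrix (Fin m) (Fin (p m)) ℝ)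
    (hU : ∀ m i j, U m i j = 1)
    (Atil : Fin n → ∀ m : ℕ, Ω → Matrix (Fin m) (Fin (p m)) ℝ)
    (hAtil : ∀ k m ω, Atil k m ω = A m + σ • Matrix.of fun i j => e k i.val j.val ω)
    (Abar : ∀ m : ℕ, Ω → Matrix (Fin m) (Fin (p m)) ℝ)
    (hAbar : ∀ m ω, Abar m ω = (n : ℝ)⁻¹ • ∑ k : Fin n, Atil k m ω) :
    ∀ᵐ ω, Tendsto
      (fun m : ℕ => (1 / (((n : ℝ) - 1) * m * p m)) *
        ∑ k : Fin n, ((Atil k m ω - Abar m ω) * (Atil k m ω - Abar m ω)ᵀ).trace)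
      atTop (nhds (σ ^ 2)) := by
  classical
  have hn0 : n ≠ 0 := by omega
  have hnR : (0 : ℝ) < n := by
    have : 0 < n := by omega
    exact_mod_cast this
  have hn1 : (0 : ℝ) < (n : ℝ) - 1 := by
    have h2 : (2 : ℝ) ≤ (n : ℝ) := by exact_mod_cast hn
    linarith
  set Y : ℕ → ℕ → Ω → ℝ := fun i j ω =>
    ∑ k : Fin n, (e k i j ω - (n : ℝ)⁻¹ * ∑ l : Fin n, e l i j ω) ^ 2 with hYdef
  have hYmeas : ∀ i j, Measurable (Y i j) := by
    intro i j
    apply Finset.measurable_sum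
    intro k _
    exact ((hmeas k i j).sub (measurable_const.mul
      (Finset.measurable_sum _ fun l _ => hmeas l i j))).pow_const 2
  have hY2le : ∀ i j ω, (Y i j ω) ^ 2 ≤ 16 * n * ∑ k : Fin n, (e k i j ω) ^ 4 :=
    fun i j ω => sumsq_center_sq_le hn0 (fun k => e k i j ω)
  have hY2int : ∀ i j, Integrable (fun ω => (Y i j ω) ^ 2) := by
    intro i j
    apply Integrable.mono' (g := fun ω => 16 * n * ∑ k : Fin n, (e k i j ω) ^ 4)
    · exact (integrable_finset_sum _ fun k _ => hmom4 k i j).const_mul _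
    · exact ((hYmeas i j).pow_const 2).aestronglyMeasurable
    · filter_upwards with ω
      rw [Real.norm_eq_abs, abs_of_nonneg (sq_nonneg _)]
      exact hY2le i j ω
  have hYmem : ∀ i j, MemLp (Y i j) 2 ℙ := fun i j =>
    (memLp_two_iff_integrable_sq (hYmeas i j).aestronglyMeasurable).2 (hY2int i j)
  have hprodint : ∀ (k l : Fin n) (i j : ℕ), Integrable (fun ω => e k i j ω * e l i j ω) := by
    intro k l i j
    rcases eq_or_ne k l with rfl | hkl
    · simpa [pow_two] using hsq k i j
    · exact (hindep.indepFun
        (show ((k, i, j) : Fin n × ℕ × ℕ) ≠ (l, i, j) by simp [hkl])).integrable_mul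
        (hint k i j) (hint l i j)
  have hprodzero : ∀ (k l : Fin n) (i j : ℕ), k ≠ l →
      ∫ ω, e k i j ω * e l i j ω = (0 : ℝ) := by
    intro k l i j hkl
    have h := (hindep.indepFun
      (show ((k, i, j) : Fin n × ℕ × ℕ) ≠ (l, i, j) by simp [hkl])).integral_mul_eq_mul_integral
      (hint k i j).1 (hint l i j).1
    have h' : ∫ ω, e k i j ω * e l i j ω = (∫ ω, e k i j ω) * ∫ ω, e l i j ω := h
    rw [h', hmean k i j, hmean l i j, mul_zero]
  have hsumsqint : ∀ i j, Integrable (fun ω => (∑ k : Fin n, e k i j ω) ^ 2) := by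
    intro i j
    have heq : (fun ω => (∑ k : Fin n, e k i j ω) ^ 2)
        = fun ω => ∑ k : Fin n, ∑ l : Fin n, e k i j ω * e l i j ω := by
      funext ω; rw [sq, Finset.sum_mul_sum]
    rw [heq]
    exact integrable_finset_sum _ fun k _ => integrable_finset_sum _ fun l _ => hprodint k l i j
  have hsumsq : ∀ i j, ∫ ω, (∑ k : Fin n, e k i j ω) ^ 2 = (n : ℝ) := by
    intro i j
    have hpt : ∀ ω : Ω, (∑ k : Fin n, e k i j ω) ^ 2
        = ∑ k : Fin n, ∑ l : Fin n, e k i j ω * e l i j ω := by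
      intro ω; rw [sq, Finset.sum_mul_sum]
    calc ∫ ω, (∑ k : Fin n, e k i j ω) ^ 2
        = ∫ ω, ∑ k : Fin n, ∑ l : Fin n, e k i j ω * e l i j ω := by simp_rw [hpt]
      _ = ∑ k : Fin n, ∫ ω, ∑ l : Fin n, e k i j ω * e l i j ω :=
          integral_finset_sum _ (fun k _ => integrable_finset_sum _ fun l _ => hprodint k l i j)
      _ = ∑ k : Fin n, ∑ l : Fin n, ∫ ω, e k i j ω * e l i j ω :=
          Finset.sum_congr rfl (fun k _ => integral_finset_sum _ (fun l _ => hprodint k l i j))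
      _ = ∑ _k : Fin n, (1 : ℝ) := by
          apply Finset.sum_congr rfl
          intro k _
          rw [Finset.sum_eq_single k]
          · simpa [pow_two] using hvar k i j
          · intro l _ hlk
            exact hprodzero k l i j (Ne.symm hlk)
          · intro hk
            exact absurd (Finset.mem_univ k) hk
      _ = (n : ℝ) := by simp
  have hEY : ∀ i j, ∫ ω, Y i j ω = (n : ℝ) - 1 := by
    intro i j
    have hpt : ∀ ω : Ω, Y i j ω
        = ∑ k : Fin n, (e k i j ω) ^ 2 - (n : ℝ)⁻¹ * (∑ k : Fin n, e k i j ω) ^ 2 :=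
      fun ω => sumsq_center hn0 (fun k => e k i j ω)
    calc ∫ ω, Y i j ω
        = ∫ ω, (∑ k : Fin n, (e k i j ω) ^ 2 - (n : ℝ)⁻¹ * (∑ k : Fin n, e k i j ω) ^ 2) := by
          simp_rw [hpt]
      _ = (∫ ω, ∑ k : Fin n, (e k i j ω) ^ 2)
          - ∫ ω, (n : ℝ)⁻¹ * (∑ k : Fin n, e k i j ω) ^ 2 :=
          integral_sub (integrable_finset_sum _ fun k _ => hsq k i j)
            ((hsumsqint i j).const_mul _)
      _ = (∑ k : Fin n, ∫ ω, (e k i j ω) ^ 2) - (n : ℝ)⁻¹ * ∫ ω, (∑ k : Fin n, e k i j ω) ^ 2 := by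
          rw [integral_finset_sum _ fun k _ => hsq k i j, integral_const_mul]
      _ = (n : ℝ) - 1 := by
          simp only [hvar, hsumsq i j, Finset.sum_const, Finset.card_univ, Fintype.card_fin,
            nsmul_eq_mul, mul_one]
          rw [inv_mul_cancel₀ (ne_of_gt hnR)]
  set C : ℝ := 16 * n * ∑ k : Fin n, ∫ ω, (e k 0 0 ω) ^ 4 with hCdef
  have hmom4eq : ∀ (k : Fin n) (i j : ℕ), ∫ ω, (e k i j ω) ^ 4 = ∫ ω, (e k 0 0 ω) ^ 4 := by
    intro k i j
    exact ((hident k i j).comp (measurable_id.pow_const 4)).integral_eq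
  have hC0 : 0 ≤ C := by
    rw [hCdef]
    apply mul_nonneg (by positivity)
    exact Finset.sum_nonneg fun k _ => integral_nonneg fun ω => by positivity
  have hVarY : ∀ i j, variance (Y i j) ℙ ≤ C := by
    intro i j
    refine le_trans (variance_le_expectation_sq (hYmeas i j).aestronglyMeasurable) ?_
    have h1 : ∫ ω, (Y i j ω) ^ 2 ≤ ∫ ω, 16 * n * ∑ k : Fin n, (e k i j ω) ^ 4 :=
      integral_mono (hY2int i j)
        ((integrable_finset_sum _ fun k _ => hmom4 k i j).const_mul _)
        (fun ω => hY2le i j ω)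
    have h2 : ∫ ω, 16 * (n : ℝ) * ∑ k : Fin n, (e k i j ω) ^ 4 = C := by
      rw [integral_const_mul, integral_finset_sum _ fun k _ => hmom4 k i j, hCdef]
      congr 1
      exact Finset.sum_congr rfl fun k _ => hmom4eq k i j
    calc (ℙ[(Y i j) ^ 2] : ℝ) = ∫ ω, (Y i j ω) ^ 2 := by rfl
      _ ≤ ∫ ω, 16 * n * ∑ k : Fin n, (e k i j ω) ^ 4 := h1
      _ = C := h2
  have hYindep : ∀ i j i' j', (i, j) ≠ (i', j') → IndepFun (Y i j) (Y i' j') ℙ := by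
    intro i j i' j' hne
    set g : (Fin n → ℝ) → ℝ :=
      fun v => ∑ k : Fin n, (v k - (n : ℝ)⁻¹ * ∑ l : Fin n, v l) ^ 2 with hgdef
    have hgmeas : Measurable g := by
      apply Finset.measurable_sum
      intro k _
      exact ((measurable_pi_apply k).sub (measurable_const.mul
        (Finset.measurable_sum _ fun l _ => measurable_pi_apply l))).pow_const 2
    set S : Finset (Fin n × ℕ × ℕ) := Finset.univ.image (fun k : Fin n => (k, i, j)) with hSdef
    set S' : Finset (Fin n × ℕ × ℕ) := Finset.univ.image (fun k : Fin n => (k, i', j')) with hS'def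
    have hST : Disjoint S S' := by
      rw [Finset.disjoint_left]
      intro q hq hq'
      rw [hSdef, Finset.mem_image] at hq
      rw [hS'def, Finset.mem_image] at hq'
      obtain ⟨k, _, rfl⟩ := hq
      obtain ⟨k', _, hk'⟩ := hq'
      apply hne
      have := congrArg Prod.snd hk'
      simp at this
      rw [Prod.ext_iff]
      exact ⟨this.1.symm, this.2.symm⟩
    have hbase := hindep.indepFun_finset S S' hST (fun q => hmeas q.1 q.2.1 q.2.2)
    have hmemS : ∀ k : Fin n, (k, i, j) ∈ S :=
      fun k => Finset.mem_image_of_mem _ (Finset.mem_univ k)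
    have hmemS' : ∀ k : Fin n, (k, i', j') ∈ S' :=
      fun k => Finset.mem_image_of_mem _ (Finset.mem_univ k)
    set φ : (S → ℝ) → (Fin n → ℝ) := fun v k => v ⟨(k, i, j), hmemS k⟩ with hφdef
    set ψ : (S' → ℝ) → (Fin n → ℝ) := fun v k => v ⟨(k, i', j'), hmemS' k⟩ with hψdef
    have hφm : Measurable φ := measurable_pi_lambda _ fun k => measurable_pi_apply _
    have hψm : Measurable ψ := measurable_pi_lambda _ fun k => measurable_pi_apply _
    have hcomp := hbase.comp (hgmeas.comp hφm) (hgmeas.comp hψm)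
    have h1 : Y i j = (g ∘ φ) ∘ (fun a (q : S) => e (q : Fin n × ℕ × ℕ).1
        (q : Fin n × ℕ × ℕ).2.1 (q : Fin n × ℕ × ℕ).2.2 a) := by
      funext a
      simp [hYdef, hgdef, hφdef, Function.comp]
    have h2 : Y i' j' = (g ∘ ψ) ∘ (fun a (q : S') => e (q : Fin n × ℕ × ℕ).1
        (q : Fin n × ℕ × ℕ).2.1 (q : Fin n × ℕ × ℕ).2.2 a) := by
      funext a
      simp [hYdef, hgdef, hψdef, Function.comp]
    rw [h1, h2]
    exact hcomp
  have hslln := rect_slln c hc p hp Y ((n : ℝ) - 1) hYmem hEY C hC0 hVarY hYindep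
  -- algebraic identity
  have halg : ∀ (m : ℕ) (ω : Ω),
      ∑ k : Fin n, ((Atil k m ω - Abar m ω) * (Atil k m ω - Abar m ω)ᵀ).trace
        = σ ^ 2 * ∑ q : Fin m × Fin (p m), Y q.1.1 q.2.1 ω := by
    intro m ω
    have hentry : ∀ (k : Fin n) (i : Fin m) (j : Fin (p m)),
        (Atil k m ω - Abar m ω) i j
          = σ * (e k i.1 j.1 ω - (n : ℝ)⁻¹ * ∑ l : Fin n, e l i.1 j.1 ω) := by
      intro k i j
      simp only [hAbar, hAtil, Matrix.sub_apply, Matrix.smul_apply, Matrix.sum_apply,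
        Matrix.add_apply, Matrix.of_apply, smul_eq_mul]
      rw [Finset.sum_add_distrib, Finset.sum_const, Finset.card_univ, Fintype.card_fin,
        nsmul_eq_mul]
      rw [← Finset.mul_sum]
      field_simp
      ring
    have htr : ∀ k : Fin n, ((Atil k m ω - Abar m ω) * (Atil k m ω - Abar m ω)ᵀ).trace
        = ∑ i : Fin m, ∑ j : Fin (p m), ((Atil k m ω - Abar m ω) i j) ^ 2 := by
      intro k
      simp [Matrix.trace, Matrix.diag, Matrix.mul_apply, Matrix.transpose_apply, sq]
    calc ∑ k : Fin n, ((Atil k m ω - Abar m ω) * (Atil k m ω - Abar m ω)ᵀ).trace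
        = ∑ k : Fin n, ∑ i : Fin m, ∑ j : Fin (p m), ((Atil k m ω - Abar m ω) i j) ^ 2 :=
          Finset.sum_congr rfl fun k _ => htr k
      _ = ∑ k : Fin n, ∑ i : Fin m, ∑ j : Fin (p m),
            σ ^ 2 * (e k i.1 j.1 ω - (n : ℝ)⁻¹ * ∑ l : Fin n, e l i.1 j.1 ω) ^ 2 := by
          apply Finset.sum_congr rfl; intro k _
          apply Finset.sum_congr rfl; intro i _
          apply Finset.sum_congr rfl; intro j _
          rw [hentry k i j, mul_pow]
      _ = σ ^ 2 * ∑ k : Fin n, ∑ i : Fin m, ∑ j : Fin (p m),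
            (e k i.1 j.1 ω - (n : ℝ)⁻¹ * ∑ l : Fin n, e l i.1 j.1 ω) ^ 2 := by
          rw [Finset.mul_sum]
          apply Finset.sum_congr rfl; intro k _
          rw [Finset.mul_sum]
          apply Finset.sum_congr rfl; intro i _
          rw [Finset.mul_sum]
      _ = σ ^ 2 * ∑ i : Fin m, ∑ j : Fin (p m), Y i.1 j.1 ω := by
          congr 1
          rw [Finset.sum_comm]
          apply Finset.sum_congr rfl; intro i _
          rw [Finset.sum_comm]
      _ = σ ^ 2 * ∑ q : Fin m × Fin (p m), Y q.1.1 q.2.1 ω := by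
          rw [Fintype.sum_prod_type]
  -- eventual positivity of p
  have hppos : ∀ᶠ m : ℕ in atTop, 0 < p m := by
    have h1 : ∀ᶠ m : ℕ in atTop, (m : ℝ) / (p m : ℝ) ∈ Set.Ioi (c / 2) :=
      hp (Ioi_mem_nhds (by linarith))
    filter_upwards [h1] with m hm
    rw [Set.mem_Ioi] at hm
    by_contra h
    push_neg at h
    interval_cases hpm : p m
    · rw [show ((0 : ℕ) : ℝ) = (0 : ℝ) by norm_cast, div_zero] at hm
      linarith
  filter_upwards [hslln] with ω hω
  have hlim := hω.const_mul (σ ^ 2 / ((n : ℝ) - 1))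
  have hval : σ ^ 2 / ((n : ℝ) - 1) * ((n : ℝ) - 1) = σ ^ 2 :=
    div_mul_cancel₀ _ (ne_of_gt hn1)
  rw [hval] at hlim
  apply Tendsto.congr' _ hlim
  filter_upwards [hppos, eventually_ge_atTop 1] with m hpm hm1
  rw [halg m ω,
    show ((n : ℝ) - 1) * m * p m = ((n : ℝ) - 1) * ((m : ℝ) * (p m : ℝ)) from by ring,
    one_div, mul_inv, div_eq_mul_inv, div_eq_mul_inv]
  ring
end

section
/- Almost surely, (1/(m·p(m)))·tr(Ā_m U_mᵀ) − (1/(m·p(m)))·tr(A_m U_mᵀ) → 0 as m → ∞. -/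
open MeasureTheory ProbabilityTheory Filter Matrix

lemma aux_abs_pow_le (x : ℝ) {k : ℕ} (hk : k ≤ 4) : |x ^ k| ≤ 1 + x ^ 4 := by
  have h4 : x ^ 4 = |x| ^ 4 := by
    rw [← abs_pow]; rw [abs_of_nonneg (by positivity)]
  rw [abs_pow, h4]
  rcases le_total |x| 1 with h | h
  · have : |x| ^ k ≤ 1 := pow_le_one₀ (abs_nonneg x) h
    nlinarith [pow_nonneg (abs_nonneg x) 4]
  · have : |x| ^ k ≤ |x| ^ 4 := pow_le_pow_right₀ h hk
    linarith

lemma aux_add_pow_four (x y : ℝ) : (x + y) ^ 4 ≤ 8 * x ^ 4 + 8 * y ^ 4 := by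
  nlinarith [sq_nonneg (x - y), sq_nonneg (x + y), sq_nonneg (x ^ 2 - y ^ 2), sq_nonneg (x ^ 2 + y ^ 2), sq_nonneg (x*y), sq_nonneg x, sq_nonneg y]

lemma aux_integrable_pow {Ω : Type*} [MeasureSpace Ω] [IsProbabilityMeasure (ℙ : Measure Ω)]
    {f : Ω → ℝ} (hf : Measurable f) (h4 : Integrable (fun ω => f ω ^ 4)) {k : ℕ} (hk : k ≤ 4) :
    Integrable (fun ω => f ω ^ k) := by
  refine Integrable.mono' ((integrable_const 1).add h4) ((hf.pow_const k).aestronglyMeasurable) ?_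
  filter_upwards with ω
  simpa [Real.norm_eq_abs] using aux_abs_pow_le (f ω) hk

lemma aux_moment4 {Ω : Type*} [MeasureSpace Ω] [IsProbabilityMeasure (ℙ : Measure Ω)]
    (e : ℕ → ℕ → Ω → ℝ)
    (hmeas : ∀ i j, Measurable (e i j))
    (hindep : iIndepFun (fun q : ℕ × ℕ => e q.1 q.2) ℙ)
    (hint4 : ∀ i j, Integrable (fun ω => (e i j ω) ^ 4))
    (hmean : ∀ i j, ∫ ω, e i j ω = 0)
    (hvar : ∀ i j, ∫ ω, (e i j ω) ^ 2 = 1)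
    (K : ℝ) (hK : ∀ i j, ∫ ω, (e i j ω) ^ 4 ≤ K)
    (a : ℕ × ℕ → ℝ) (s : Finset (ℕ × ℕ)) :
    Integrable (fun ω => (∑ q ∈ s, a q * e q.1 q.2 ω) ^ 4) ∧
    (∫ ω, ∑ q ∈ s, a q * e q.1 q.2 ω) = 0 ∧
    (∫ ω, (∑ q ∈ s, a q * e q.1 q.2 ω) ^ 2) = ∑ q ∈ s, (a q) ^ 2 ∧
    (∫ ω, (∑ q ∈ s, a q * e q.1 q.2 ω) ^ 4) ≤ (K + 3) * (∑ q ∈ s, (a q) ^ 2) ^ 2 := by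
  classical
  have hK0 : 0 ≤ K := le_trans (integral_nonneg fun ω => by positivity) (hK 0 0)
  induction s using Finset.induction_on with
  | empty => simp
  | @insert q₀ s hq₀ ih =>
    obtain ⟨ih4, ihm, ih2, ihb⟩ := ih
    set S : Ω → ℝ := fun ω => ∑ q ∈ s, a q * e q.1 q.2 ω with hS
    set T : Ω → ℝ := fun ω => a q₀ * e q₀.1 q₀.2 ω with hT
    have hsum : ∀ ω, (∑ q ∈ insert q₀ s, a q * e q.1 q.2 ω) = S ω + T ω := by
      intro ω; rw [Finset.sum_insert hq₀]; ring
    have hSmeas : Measurable S := Finset.measurable_sum _ fun q _ => (hmeas q.1 q.2).const_mul _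
    have hTmeas : Measurable T := (hmeas q₀.1 q₀.2).const_mul _
    have hT4 : Integrable (fun ω => T ω ^ 4) := by
      have := (hint4 q₀.1 q₀.2).const_mul ((a q₀) ^ 4)
      refine this.congr ?_
      filter_upwards with ω
      simp only [hT]; ring
    have hSk : ∀ k ≤ 4, Integrable (fun ω => S ω ^ k) := fun k hk => aux_integrable_pow hSmeas ih4 hk
    have hTk : ∀ k ≤ 4, Integrable (fun ω => T ω ^ k) := fun k hk => aux_integrable_pow hTmeas hT4 hk
    -- independence
    have hindep' : iIndepFun
        (fun q : ℕ × ℕ => fun ω => a q * e q.1 q.2 ω) ℙ := by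
      have := hindep.comp (fun q (x : ℝ) => a q * x) (fun q => measurable_id.const_mul _)
      exact this
    have hST : IndepFun S T ℙ := by
      have h := hindep'.indepFun_finsetSum_of_notMem
        (fun q => (hmeas q.1 q.2).const_mul _) hq₀
      have hfun : (∑ q ∈ s, fun ω => a q * e q.1 q.2 ω) = S := by
        funext ω; simp [hS, Finset.sum_apply]
      rwa [hfun] at h
    have hIJ : ∀ k l : ℕ, IndepFun (fun ω => S ω ^ k) (fun ω => T ω ^ l) ℙ :=
      fun k l => hST.comp (measurable_id.pow_const k) (measurable_id.pow_const l)
    have hmul_int : ∀ k l : ℕ, k ≤ 4 → l ≤ 4 →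
        Integrable (fun ω => S ω ^ k * T ω ^ l) := by
      intro k l hk hl
      exact (hIJ k l).integrable_mul (hSk k hk) (hTk l hl)
    have hmul_eq : ∀ k l : ℕ, (∫ ω, S ω ^ k * T ω ^ l) = (∫ ω, S ω ^ k) * (∫ ω, T ω ^ l) :=
      fun k l => (hIJ k l).integral_fun_mul_eq_mul_integral ((hSmeas.pow_const k).aestronglyMeasurable)
        ((hTmeas.pow_const l).aestronglyMeasurable)
    -- moments of T
    have iT : ∫ ω, T ω = 0 := by
      simp only [hT]; rw [integral_const_mul, hmean]; ring
    have iT2 : (∫ ω, T ω ^ 2) = (a q₀) ^ 2 := by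
      have : ∀ ω, T ω ^ 2 = (a q₀) ^ 2 * (e q₀.1 q₀.2 ω) ^ 2 := fun ω => by simp [hT]; ring
      rw [integral_congr_ae (Filter.Eventually.of_forall this), integral_const_mul, hvar, mul_one]
    have iT4 : (∫ ω, T ω ^ 4) ≤ (a q₀) ^ 4 * K := by
      have : ∀ ω, T ω ^ 4 = (a q₀) ^ 4 * (e q₀.1 q₀.2 ω) ^ 4 := fun ω => by simp [hT]; ring
      rw [integral_congr_ae (Filter.Eventually.of_forall this), integral_const_mul]
      exact mul_le_mul_of_nonneg_left (hK _ _) (by positivity)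
    -- goal pieces
    have g4 : Integrable (fun ω => (S ω + T ω) ^ 4) := by
      refine Integrable.mono' ((ih4.const_mul 8).add (hT4.const_mul 8))
        (((hSmeas.add hTmeas).pow_const 4).aestronglyMeasurable) ?_
      filter_upwards with ω
      rw [Real.norm_eq_abs, abs_of_nonneg (by positivity)]
      exact aux_add_pow_four (S ω) (T ω)
    have gEq4 : (∫ ω, (S ω + T ω) ^ 4) =
        (∫ ω, S ω ^ 4) + 4 * ((∫ ω, S ω ^ 3) * (∫ ω, T ω)) + 6 * ((∫ ω, S ω ^ 2) * (∫ ω, T ω ^ 2))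
          + 4 * ((∫ ω, S ω) * (∫ ω, T ω ^ 3)) + (∫ ω, T ω ^ 4) := by
      have expand : ∀ ω, (S ω + T ω) ^ 4 =
          S ω ^ 4 + 4 * (S ω ^ 3 * T ω ^ 1) + 6 * (S ω ^ 2 * T ω ^ 2)
            + 4 * (S ω ^ 1 * T ω ^ 3) + T ω ^ 4 := fun ω => by ring
      rw [integral_congr_ae (Filter.Eventually.of_forall expand)]
      rw [integral_add, integral_add, integral_add, integral_add]
      · rw [integral_const_mul, integral_const_mul, integral_const_mul,
          hmul_eq 3 1, hmul_eq 2 2, hmul_eq 1 3]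
        norm_num
      -- integrability side goals
      · exact hSk 4 le_rfl
      · exact (hmul_int 3 1 (by norm_num) (by norm_num)).const_mul 4
      · exact (hSk 4 le_rfl).add ((hmul_int 3 1 (by norm_num) (by norm_num)).const_mul 4)
      · exact (hmul_int 2 2 (by norm_num) (by norm_num)).const_mul 6
      · exact ((hSk 4 le_rfl).add ((hmul_int 3 1 (by norm_num) (by norm_num)).const_mul 4)).add
          ((hmul_int 2 2 (by norm_num) (by norm_num)).const_mul 6)
      · exact (hmul_int 1 3 (by norm_num) (by norm_num)).const_mul 4
      · exact (((hSk 4 le_rfl).add ((hmul_int 3 1 (by norm_num) (by norm_num)).const_mul 4)).add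
          ((hmul_int 2 2 (by norm_num) (by norm_num)).const_mul 6)).add
          ((hmul_int 1 3 (by norm_num) (by norm_num)).const_mul 4)
      · exact hTk 4 le_rfl
    have hIS : Integrable S := by simpa using hSk 1 (by norm_num)
    have hIT : Integrable T := by simpa using hTk 1 (by norm_num)
    have pow1S : (∫ ω, S ω ^ 1) = ∫ ω, S ω := by norm_num
    have pow1T : (∫ ω, T ω ^ 1) = ∫ ω, T ω := by norm_num
    have hA2nonneg : (0:ℝ) ≤ ∑ q ∈ s, (a q) ^ 2 := Finset.sum_nonneg fun q _ => sq_nonneg _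
    refine ⟨?_, ?_, ?_, ?_⟩
    · refine g4.congr ?_
      filter_upwards with ω
      rw [hsum ω]
    · rw [integral_congr_ae (Filter.Eventually.of_forall fun ω => hsum ω),
        integral_add hIS hIT, ihm, iT, add_zero]
    · have expand2 : ∀ ω, (∑ q ∈ insert q₀ s, a q * e q.1 q.2 ω) ^ 2
          = S ω ^ 2 + 2 * (S ω ^ 1 * T ω ^ 1) + T ω ^ 2 :=
        fun ω => by rw [hsum ω]; ring
      rw [integral_congr_ae (Filter.Eventually.of_forall expand2),
        integral_add, integral_add, integral_const_mul, hmul_eq 1 1, pow1S, ihm, iT2, ih2,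
        Finset.sum_insert hq₀]
      · ring
      · exact hSk 2 (by norm_num)
      · exact (hmul_int 1 1 (by norm_num) (by norm_num)).const_mul 2
      · exact (hSk 2 (by norm_num)).add
          ((hmul_int 1 1 (by norm_num) (by norm_num)).const_mul 2)
      · exact hTk 2 (by norm_num)
    · rw [integral_congr_ae (Filter.Eventually.of_forall
        (fun ω => by rw [hsum ω] :
          ∀ ω, (∑ q ∈ insert q₀ s, a q * e q.1 q.2 ω) ^ 4 = (S ω + T ω) ^ 4))]
      have key : (∫ ω, (S ω + T ω) ^ 4)
          = (∫ ω, S ω ^ 4) + 6 * ((∑ q ∈ s, (a q) ^ 2) * (a q₀) ^ 2) + (∫ ω, T ω ^ 4) := by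
        rw [gEq4, iT, ih2, iT2]
        have : (∫ ω, S ω) = 0 := ihm
        rw [this]
        ring
      rw [key, Finset.sum_insert hq₀]
      nlinarith [sq_nonneg (a q₀), ihb, iT4, mul_nonneg hA2nonneg (sq_nonneg (a q₀)),
        mul_nonneg hK0 (mul_nonneg hA2nonneg (sq_nonneg (a q₀))),
        mul_nonneg hK0 (sq_nonneg ((a q₀)^2))]

set_option maxHeartbeats 1000000 in
/-- column-correlated noise: a.s. (1/(mp))·tr(Ā_m U_mᵀ) − (1/(mp))·tr(A_m U_mᵀ) → 0. -/
theorem stmt7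
    {Ω : Type*} [MeasureSpace Ω] [IsProbabilityMeasure (ℙ : Measure Ω)]
    (c : ℝ) (hc : 0 < c)
    (p : ℕ → ℕ)
    (hp : Tendsto (fun m : ℕ => (m : ℝ) / (p m : ℝ)) atTop (nhds c))
    (n : ℕ) (hn : 2 ≤ n)
    (e : ℕ → ℕ → Ω → ℝ)
    (hmeas : ∀ i j, Measurable (e i j))
    (hindep : iIndepFun (fun q : ℕ × ℕ => e q.1 q.2) ℙ)
    (hident : ∀ i j, IdentDistrib (e i j) (e 0 0) ℙ ℙ)
    (hint : ∀ i j, Integrable (e i j))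
    (hsq : ∀ i j, Integrable (fun ω => (e i j ω) ^ 2))
    (hmean : ∀ i j, ∫ ω, e i j ω = 0)
    (hvar : ∀ i j, ∫ ω, (e i j ω) ^ 2 = 1)
    (ε : ℝ) (hε : 0 < ε)
    (hmom : ∀ i j, Integrable (fun ω => |e i j ω| ^ ((4 : ℝ) + ε)))
    (Sig : ∀ m : ℕ, Matrix (Fin m) (Fin m) ℝ)
    (hSigSymm : ∀ m, (Sig m).IsSymm)
    (hSigPD : ∀ m, (Sig m).PosDef)
    (hSigTr : ∃ C : ℝ, ∀ m : ℕ, (1 / (m : ℝ)) * (Sig m).trace ≤ C)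
    (Sqrt : ∀ m : ℕ, Matrix (Fin m) (Fin m) ℝ)
    (hSqrtSymm : ∀ m, (Sqrt m).IsSymm)
    (hSqrtPD : ∀ m, (Sqrt m).PosDef)
    (hSqrtSq : ∀ m, Sqrt m * Sqrt m = Sig m)
    (A : ∀ m : ℕ, Matrix (Fin m) (Fin (p m)) ℝ)
    (hA : ∃ C : ℝ, ∀ m : ℕ, (1 / (m * p m : ℝ)) * (A m * (A m)ᵀ).trace ≤ C)
    (U : ∀ m : ℕ, Matrix (Fin m) (Fin (p m)) ℝ)
    (hU : ∀ m i j, U m i j = 1)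
    (Abar : ∀ m : ℕ, Ω → Matrix (Fin m) (Fin (p m)) ℝ)
    (hAbar : ∀ m ω, Abar m ω =
      A m + (1 / Real.sqrt n) •
      (Sqrt m * (Matrix.of fun i j => e i.val j.val ω : Matrix (Fin m) (Fin (p m)) ℝ))) :
    ∀ᵐ ω, Tendsto
      (fun m : ℕ => (1 / (m * p m : ℝ)) * (Abar m ω * (U m)ᵀ).trace - (1 / (m * p m : ℝ)) * (A m * (U m)ᵀ).trace)
      atTop (nhds 0) := by
  classical
  -- the random variable of interest
  set X : ℕ → Ω → ℝ := fun m ω =>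
    (1 / (m * p m : ℝ)) * (Abar m ω * (U m)ᵀ).trace
      - (1 / (m * p m : ℝ)) * (A m * (U m)ᵀ).trace with hX
  -- index sets and weights
  set sf : ℕ → Finset (ℕ × ℕ) := fun m => Finset.range m ×ˢ Finset.range (p m) with hsf
  set w : ℕ → ℕ × ℕ → ℝ := fun m q =>
    if h : q.1 < m then ∑ i : Fin m, Sqrt m i ⟨q.1, h⟩ else 0 with hw
  -- pointwise identity
  have hXeq : ∀ m ω, X m ω =
      (1 / (m * p m : ℝ) * (1 / Real.sqrt n)) * ∑ q ∈ sf m, w m q * e q.1 q.2 ω := by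
    intro m ω
    have htr : ((Sqrt m * (Matrix.of fun i j => e i.val j.val ω : Matrix (Fin m) (Fin (p m)) ℝ)) * (U m)ᵀ).trace
        = ∑ q ∈ sf m, w m q * e q.1 q.2 ω := by
      have lhs1 : ((Sqrt m * (Matrix.of fun i j => e i.val j.val ω : Matrix (Fin m) (Fin (p m)) ℝ)) * (U m)ᵀ).trace
          = ∑ i : Fin m, ∑ j : Fin (p m), ∑ k : Fin m, Sqrt m i k * e k.val j.val ω := by
        simp [Matrix.trace, Matrix.diag, Matrix.mul_apply, Matrix.transpose_apply, hU]
      have rhs1 : ∑ q ∈ sf m, w m q * e q.1 q.2 ω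
          = ∑ k : Fin m, ∑ j : Fin (p m), ∑ i : Fin m, Sqrt m i k * e k.val j.val ω := by
        rw [hsf]
        simp only [Finset.sum_product]
        rw [← Fin.sum_univ_eq_sum_range (fun k => ∑ j ∈ Finset.range (p m),
          w m (k, j) * e k j ω) m]
        refine Finset.sum_congr rfl fun k _ => ?_
        rw [← Fin.sum_univ_eq_sum_range (fun j => w m ((k : ℕ), j) * e k j ω) (p m)]
        refine Finset.sum_congr rfl fun j _ => ?_
        rw [hw]
        simp only
        rw [dif_pos k.isLt, Finset.sum_mul]
      rw [lhs1, rhs1]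
      rw [Finset.sum_comm]
      exact (Finset.sum_congr rfl fun j _ => Finset.sum_comm).trans Finset.sum_comm
    rw [hX]
    simp only [hAbar m ω, Matrix.add_mul, Matrix.trace_add, Matrix.smul_mul, Matrix.trace_smul,
      smul_eq_mul, htr]
    ring
  -- fourth moments of the entries
  have hint4 : ∀ i j, Integrable (fun ω => (e i j ω) ^ 4) := by
    intro i j
    refine Integrable.mono' ((integrable_const 1).add (hmom i j))
      (((hmeas i j).pow_const 4).aestronglyMeasurable) ?_
    filter_upwards with ω
    simp only [Pi.add_apply]
    rw [Real.norm_eq_abs, abs_pow]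
    rcases le_total |e i j ω| 1 with h | h
    · have h1 : |e i j ω| ^ 4 ≤ 1 := pow_le_one₀ (abs_nonneg _) h
      have h2 : (0:ℝ) ≤ |e i j ω| ^ ((4:ℝ) + ε) := Real.rpow_nonneg (abs_nonneg _) _
      linarith
    · have h1 : |e i j ω| ^ (4:ℕ) = |e i j ω| ^ ((4:ℕ):ℝ) := (Real.rpow_natCast _ 4).symm
      have h2 : |e i j ω| ^ ((4:ℕ):ℝ) ≤ |e i j ω| ^ ((4:ℝ) + ε) := by
        apply Real.rpow_le_rpow_of_exponent_le h
        push_cast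
        linarith
      rw [h1]
      linarith
  set K : ℝ := ∫ ω, (e 0 0 ω) ^ 4 with hKdef
  have hK0 : 0 ≤ K := integral_nonneg fun ω => by positivity
  have hKall : ∀ i j, (∫ ω, (e i j ω) ^ 4) ≤ K := by
    intro i j
    exact le_of_eq ((hident i j).comp (measurable_id.pow_const 4)).integral_eq
  have hM := fun m => aux_moment4 e hmeas hindep hint4 hmean hvar K hKall (w m) (sf m)
  -- trace of Sig as sum of squares of Sqrt
  have htrSig : ∀ m, (Sig m).trace = ∑ k : Fin m, ∑ i : Fin m, (Sqrt m i k) ^ 2 := by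
    intro m
    rw [← hSqrtSq m]
    have : (Sqrt m * Sqrt m).trace = ∑ i : Fin m, ∑ k : Fin m, Sqrt m i k * Sqrt m k i := by
      simp [Matrix.trace, Matrix.diag, Matrix.mul_apply]
    rw [this, Finset.sum_comm]
    refine Finset.sum_congr rfl fun k _ => Finset.sum_congr rfl fun i _ => ?_
    rw [(hSqrtSymm m).apply i k]
    ring
  -- the weight sums
  have hA2 : ∀ m, (∑ q ∈ sf m, (w m q) ^ 2)
      = (p m : ℝ) * ∑ k : Fin m, (∑ i : Fin m, Sqrt m i k) ^ 2 := by
    intro m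
    rw [hsf]
    simp only [Finset.sum_product]
    have inner : ∀ k : ℕ, (∑ j ∈ Finset.range (p m), (w m (k, j)) ^ 2)
        = (p m : ℝ) * (w m (k, 0)) ^ 2 := by
      intro k
      have hconst : ∀ j ∈ Finset.range (p m), (w m (k, j)) ^ 2 = (w m (k, 0)) ^ 2 := by
        intro j _
        rw [hw]
      rw [Finset.sum_congr rfl hconst, Finset.sum_const, Finset.card_range, nsmul_eq_mul]
    rw [Finset.sum_congr rfl fun k _ => inner k, Finset.mul_sum,
      ← Fin.sum_univ_eq_sum_range (fun k => (p m : ℝ) * (w m (k, 0)) ^ 2) m]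
    refine Finset.sum_congr rfl fun k _ => ?_
    rw [hw]
    simp only
    rw [dif_pos k.isLt]
  obtain ⟨C, hC⟩ := hSigTr
  set D : ℝ := (K + 3) * C ^ 2 with hD
  have hD0 : 0 ≤ D := mul_nonneg (by linarith) (sq_nonneg C)
  -- integrability of X^4
  have hXint : ∀ m, Integrable (fun ω => (X m ω) ^ 4) := by
    intro m
    refine ((hM m).1.const_mul ((1 / (m * p m : ℝ) * (1 / Real.sqrt n)) ^ 4)).congr ?_
    filter_upwards with ω
    rw [hXeq m ω]
    ring
  have hIeq : ∀ m, (∫ ω, (X m ω) ^ 4) = (1 / (m * p m : ℝ) * (1 / Real.sqrt n)) ^ 4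
      * ∫ ω, (∑ q ∈ sf m, w m q * e q.1 q.2 ω) ^ 4 := by
    intro m
    rw [← integral_const_mul]
    refine integral_congr_ae (Filter.Eventually.of_forall fun ω => ?_)
    simp only
    rw [hXeq m ω]
    ring
  have hsqrtn : ((1:ℝ) / Real.sqrt n) ^ 4 = 1 / (n:ℝ) ^ 2 := by
    rw [div_pow, one_pow]
    congr 1
    rw [show (4:ℕ) = 2 * 2 from rfl, pow_mul, Real.sq_sqrt (by positivity)]
  -- the main quantitative bound
  have hIb : ∀ m, 1 ≤ m → 1 ≤ p m → (∫ ω, (X m ω) ^ 4) ≤ D / (p m : ℝ) ^ 2 := by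
    intro m hm hpm
    have hM1 : (1:ℝ) ≤ (m:ℝ) := by exact_mod_cast hm
    have hP1 : (1:ℝ) ≤ (p m : ℝ) := by exact_mod_cast hpm
    have hMpos : (0:ℝ) < m := by linarith
    have hPpos : (0:ℝ) < p m := by linarith
    have hNpos : (0:ℝ) < n := by positivity
    have htr_le : (Sig m).trace ≤ C * m := by
      have h := hC m
      rw [one_div, inv_mul_le_iff₀ hMpos] at h
      linarith [h]
    have hsum_sq_le : (∑ k : Fin m, (∑ i : Fin m, Sqrt m i k) ^ 2) ≤ (m:ℝ) * (Sig m).trace := by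
      rw [htrSig m, Finset.mul_sum]
      refine Finset.sum_le_sum fun k _ => ?_
      have h := sq_sum_le_card_mul_sum_sq (s := (Finset.univ : Finset (Fin m)))
        (f := fun i : Fin m => Sqrt m i k)
      simpa [Finset.card_univ] using h
    have hA2nn : (0:ℝ) ≤ ∑ q ∈ sf m, (w m q) ^ 2 := Finset.sum_nonneg fun q _ => sq_nonneg _
    have hA2le : (∑ q ∈ sf m, (w m q) ^ 2) ≤ (p m : ℝ) * ((m:ℝ) * (C * m)) := by
      rw [hA2 m]
      refine mul_le_mul_of_nonneg_left ?_ (by positivity)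
      exact le_trans hsum_sq_le (mul_le_mul_of_nonneg_left htr_le (by positivity))
    have hS4le : (∫ ω, (∑ q ∈ sf m, w m q * e q.1 q.2 ω) ^ 4)
        ≤ (K + 3) * ((p m : ℝ) * ((m:ℝ) * (C * m))) ^ 2 :=
      le_trans (hM m).2.2.2
        (mul_le_mul_of_nonneg_left (pow_le_pow_left₀ hA2nn hA2le 2) (by linarith))
    rw [hIeq m]
    have hcst : (0:ℝ) ≤ (1 / (m * p m : ℝ) * (1 / Real.sqrt n)) ^ 4 := by positivity
    calc (1 / (m * p m : ℝ) * (1 / Real.sqrt n)) ^ 4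
          * ∫ ω, (∑ q ∈ sf m, w m q * e q.1 q.2 ω) ^ 4
        ≤ (1 / (m * p m : ℝ) * (1 / Real.sqrt n)) ^ 4
          * ((K + 3) * ((p m : ℝ) * ((m:ℝ) * (C * m))) ^ 2) :=
          mul_le_mul_of_nonneg_left hS4le hcst
      _ = D / ((p m : ℝ) ^ 2 * (n:ℝ) ^ 2) := by
          rw [mul_pow, hsqrtn, hD]
          have hM0 : (m:ℝ) ≠ 0 := ne_of_gt hMpos
          have hP0 : (p m : ℝ) ≠ 0 := ne_of_gt hPpos
          have hN0 : (n:ℝ) ≠ 0 := ne_of_gt hNpos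
          field_simp
      _ ≤ D / (p m : ℝ) ^ 2 := by
          apply div_le_div_of_nonneg_left hD0 (by positivity)
          have hN1 : (1:ℝ) ≤ (n:ℝ) ^ 2 := by
            have : (2:ℝ) ≤ n := by exact_mod_cast hn
            nlinarith
          nlinarith [sq_nonneg ((p m : ℝ))]
  -- degenerate indices
  have hXzero : ∀ m, p m = 0 → ∀ ω, X m ω = 0 := by
    intro m h ω
    rw [hXeq m ω, hsf]
    simp [h]
  -- eventual bound for the fourth-moment sequence
  have hev : ∀ᶠ m : ℕ in atTop, (∫ ω, (X m ω) ^ 4) ≤ (D * (2 * c) ^ 2) / (m:ℝ) ^ 2 := by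
    have h1 : ∀ᶠ m : ℕ in atTop, (m:ℝ) / (p m : ℝ) ∈ Set.Ioo (c/2) (2*c) :=
      hp.eventually (Ioo_mem_nhds (by linarith) (by linarith))
    filter_upwards [h1, eventually_ge_atTop 1] with m hm1 hm2
    have hpm : 1 ≤ p m := by
      rcases Nat.eq_zero_or_pos (p m) with h' | h'
      · exfalso
        rw [h'] at hm1
        have hz : (m:ℝ) / ((0:ℕ):ℝ) = 0 := by simp
        rw [hz] at hm1
        linarith [hm1.1]
      · exact h'
    have hM1 : (1:ℝ) ≤ (m:ℝ) := by exact_mod_cast hm2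
    have hP1 : (1:ℝ) ≤ (p m : ℝ) := by exact_mod_cast hpm
    have hPpos : (0:ℝ) < (p m : ℝ) := by linarith
    have hdiv : (m:ℝ) / (p m : ℝ) ≤ 2 * c := le_of_lt hm1.2
    have hmle : (m:ℝ) ≤ 2 * c * (p m : ℝ) := by
      rw [div_le_iff₀ hPpos] at hdiv
      linarith
    have hsq : (m:ℝ) ^ 2 ≤ (2 * c) ^ 2 * (p m : ℝ) ^ 2 := by nlinarith
    refine le_trans (hIb m hm2 hpm) ?_
    rw [div_le_div_iff₀ (by positivity) (by positivity)]
    calc D * (m:ℝ) ^ 2 ≤ D * ((2 * c) ^ 2 * (p m : ℝ) ^ 2) :=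
          mul_le_mul_of_nonneg_left hsq hD0
      _ = D * (2 * c) ^ 2 * (p m : ℝ) ^ 2 := by ring
  -- summability of the fourth moments
  have hsummable : Summable (fun m : ℕ => ∫ ω, (X m ω) ^ 4) := by
    refine summable_of_isBigO_nat
      (Real.summable_one_div_nat_pow.mpr (by norm_num : 1 < 2)) ?_
    rw [Asymptotics.isBigO_iff]
    refine ⟨D * (2 * c) ^ 2, ?_⟩
    filter_upwards [hev, eventually_ge_atTop 1] with m hm hm1
    have hM1 : (1:ℝ) ≤ (m:ℝ) := by exact_mod_cast hm1
    have hInn : (0:ℝ) ≤ ∫ ω, (X m ω) ^ 4 := integral_nonneg fun ω => by positivity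
    rw [Real.norm_eq_abs, Real.norm_eq_abs, abs_of_nonneg hInn,
      abs_of_nonneg (by positivity : (0:ℝ) ≤ 1 / (m:ℝ) ^ 2)]
    calc (∫ ω, (X m ω) ^ 4) ≤ (D * (2 * c) ^ 2) / (m:ℝ) ^ 2 := hm
      _ = D * (2 * c) ^ 2 * (1 / (m:ℝ) ^ 2) := by ring
  -- measurability of X m
  have hXmeas : ∀ m, Measurable (X m) := by
    intro m
    have hfe : X m = fun ω => (1 / (m * p m : ℝ) * (1 / Real.sqrt n))
        * ∑ q ∈ sf m, w m q * e q.1 q.2 ω := funext (hXeq m)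
    rw [hfe]
    exact (Finset.measurable_sum _ fun q _ => (hmeas q.1 q.2).const_mul _).const_mul _
  -- a.e. summability
  have key : ∀ᵐ ω, Summable fun m : ℕ => (X m ω) ^ 4 := by
    have h2 : ∀ m, (∫⁻ ω, ENNReal.ofReal ((X m ω) ^ 4))
        = ENNReal.ofReal (∫ ω, (X m ω) ^ 4) := fun m =>
      (ofReal_integral_eq_lintegral_ofReal (hXint m)
        (Filter.Eventually.of_forall fun ω => by positivity)).symm
    have hmeas2 : ∀ m : ℕ, Measurable (fun ω => ENNReal.ofReal ((X m ω) ^ 4)) :=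
      fun m => ENNReal.measurable_ofReal.comp ((hXmeas m).pow_const 4)
    have h4 : ∀ᵐ ω, (∑' m : ℕ, ENNReal.ofReal ((X m ω) ^ 4)) < ⊤ := by
      apply ae_lt_top (Measurable.ennreal_tsum hmeas2)
      rw [lintegral_tsum (fun m => (hmeas2 m).aemeasurable), tsum_congr h2]
      rw [← ENNReal.ofReal_tsum_of_nonneg
        (fun m => integral_nonneg fun ω => by positivity) hsummable]
      exact ENNReal.ofReal_ne_top
    filter_upwards [h4] with ω hω
    have hs := ENNReal.summable_toReal hω.ne
    exact hs.congr fun m => ENNReal.toReal_ofReal (by positivity)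
  -- conclusion
  filter_upwards [key] with ω hω
  have h0 : Tendsto (fun m : ℕ => (X m ω) ^ 4) atTop (nhds 0) := hω.tendsto_atTop_zero
  have hfinal : Tendsto (fun m : ℕ => X m ω) atTop (nhds 0) := by
    rw [Metric.tendsto_atTop] at h0 ⊢
    intro δ hδ
    obtain ⟨N, hN⟩ := h0 (δ ^ 4) (by positivity)
    refine ⟨N, fun m hm => ?_⟩
    have h := hN m hm
    rw [Real.dist_eq, sub_zero] at h ⊢
    by_contra hcon
    push_neg at hcon
    have : δ ^ 4 ≤ |X m ω| ^ 4 := pow_le_pow_left₀ (le_of_lt hδ) hcon 4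
    rw [← abs_pow] at this
    linarith
  exact hfinal
end

section
/- Almost surely, (1/(m·p(m)))·Σ_{1 ≤ i ≤ m, 1 ≤ j ≤ p(m)} e_{ij} → 0 as m → ∞. -/
set_option maxHeartbeats 800000


open MeasureTheory ProbabilityTheory Filter Matrix

/-- SLLN for a doubly indexed i.i.d. family with mean 0 and variance 1:
almost surely `(1/(m·p(m))) Σ_{i<m, j<p(m)} e_{ij} → 0` as `m → ∞`. -/
theorem stmt13
    {Ω : Type*} [MeasureSpace Ω] [IsProbabilityMeasure (ℙ : Measure Ω)]
    (c : ℝ) (hc : 0 < c)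
    (p : ℕ → ℕ)
    (hp : Tendsto (fun m : ℕ => (m : ℝ) / (p m : ℝ)) atTop (nhds c))
    (e : ℕ → ℕ → Ω → ℝ)
    (hmeas : ∀ i j, Measurable (e i j))
    (hindep : iIndepFun (fun q : ℕ × ℕ => e q.1 q.2) ℙ)
    (hident : ∀ i j, IdentDistrib (e i j) (e 0 0) ℙ ℙ)
    (hint : ∀ i j, Integrable (e i j))
    (hsq : ∀ i j, Integrable (fun ω => (e i j ω) ^ 2))
    (hmean : ∀ i j, ∫ ω, e i j ω = 0)
    (hvar : ∀ i j, ∫ ω, (e i j ω) ^ 2 = 1) :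
    ∀ᵐ ω, Tendsto
      (fun m : ℕ => (1 / (m * p m : ℝ)) * ∑ i : Fin m, ∑ j : Fin (p m), e i j ω)
      atTop (nhds 0) := by
  classical
  set Z : ℕ → Ω → ℝ := fun m ω =>
    (1 / (m * p m : ℝ)) * ∑ i : Fin m, ∑ j : Fin (p m), e i j ω with hZdef
  set s : ℕ → Finset (ℕ × ℕ) := fun m => Finset.range m ×ˢ Finset.range (p m) with hsdef
  set S : ℕ → Ω → ℝ := fun m ω => ∑ q ∈ s m, e q.1 q.2 ω with hSdef
  have hsum_eq : ∀ m ω, (∑ i : Fin m, ∑ j : Fin (p m), e i j ω) = S m ω := by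
    intro m ω
    rw [hSdef]
    simp only [hsdef, Finset.sum_product]
    rw [Fin.sum_univ_eq_sum_range (fun i => ∑ j : Fin (p m), e i j ω)]
    exact Finset.sum_congr rfl fun i _ => Fin.sum_univ_eq_sum_range (fun x => e i x ω) (p m)
  have hL2 : ∀ i j, MemLp (e i j) 2 ℙ := fun i j =>
    (memLp_two_iff_integrable_sq (hmeas i j).aestronglyMeasurable).2 (hsq i j)
  -- Memℒp of the partial sums
  have hSL2 : ∀ m, MemLp (S m) 2 ℙ := by
    intro m
    have hfun : S m = ∑ q ∈ s m, (fun ω => e q.1 q.2 ω) := by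
      ext ω; simp [hSdef, Finset.sum_apply]
    rw [hfun]
    exact memLp_finset_sum' _ (fun q _ => hL2 q.1 q.2)
  -- mean zero
  have hSmean : ∀ m, ∫ ω, S m ω = 0 := by
    intro m
    rw [hSdef]
    simp only
    rw [integral_finset_sum _ (fun q _ => hint q.1 q.2)]
    simp [hmean]
  -- variance of each e is 1
  have hvar1 : ∀ i j, variance (e i j) ℙ = 1 := by
    intro i j
    rw [variance_of_integral_eq_zero (hL2 i j).aestronglyMeasurable.aemeasurable (hmean i j)]
    simpa [Pi.pow_apply] using hvar i j
  -- second moment of the sum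
  have hSvar : ∀ m, ∫ ω, (S m ω) ^ 2 = (m * p m : ℝ) := by
    intro m
    have hfun : S m = ∑ q ∈ s m, (fun ω => e q.1 q.2 ω) := by
      ext ω; simp [hSdef, Finset.sum_apply]
    have hpair : Set.Pairwise ↑(s m)
        (fun q q' : ℕ × ℕ => IndepFun (e q.1 q.2) (e q'.1 q'.2) ℙ) := by
      intro q _ q' _ hqq'
      exact hindep.indepFun hqq'
    have hv : variance (S m) ℙ = ∑ q ∈ s m, variance (e q.1 q.2) ℙ := by
      rw [hfun]
      exact IndepFun.variance_sum (fun q _ => hL2 q.1 q.2) hpair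
    have := variance_of_integral_eq_zero (hSL2 m).aestronglyMeasurable.aemeasurable (hSmean m)
    have h2 : ∫ ω, (S m ω) ^ 2 = variance (S m) ℙ := by
      rw [this]
    rw [h2, hv]
    simp [hvar1, hsdef]
  -- second moment of Z m
  have hZint : ∀ m, Integrable (fun ω => (Z m ω) ^ 2) := by
    intro m
    have : Integrable (fun ω => (S m ω) ^ 2) := by
      simpa [Pi.pow_apply] using (hSL2 m).integrable_sq
    have h := this.const_mul ((1 / (m * p m : ℝ)) ^ 2)
    refine h.congr (Filter.Eventually.of_forall fun ω => ?_)
    simp [hZdef, hsum_eq m ω, mul_pow]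
  have hZsq : ∀ m, ∫ ω, (Z m ω) ^ 2 = 1 / (m * p m : ℝ) := by
    intro m
    have h1 : (fun ω => (Z m ω) ^ 2)
        = fun ω => (1 / (m * p m : ℝ)) ^ 2 * (S m ω) ^ 2 := by
      ext ω; simp [hZdef, hsum_eq m ω, mul_pow]
    rw [h1, integral_const_mul, hSvar m]
    rcases eq_or_ne ((m : ℝ) * p m) 0 with h | h
    · simp [h]
    · field_simp
  -- summability of the second moments
  have hsummable : Summable (fun m : ℕ => 1 / ((m : ℝ) * (p m : ℝ))) := by
    have hppos : ∀ᶠ m : ℕ in atTop, (m : ℝ) / (p m : ℝ) < c + 1 ∧ (0:ℝ) < (m:ℝ) / (p m : ℝ) := by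
      filter_upwards [hp.eventually_lt_const (by linarith : c < c + 1),
        hp.eventually_const_lt (by linarith : (0:ℝ) < c)] with m h1 h2
      exact ⟨h1, h2⟩
    obtain ⟨N, hN⟩ := (hppos.and (eventually_ge_atTop 1)).exists_forall_of_atTop
    have hbound : ∀ m, N ≤ m → 1 / ((m : ℝ) * (p m : ℝ)) ≤ (c + 1) / (m : ℝ) ^ 2 := by
      intro m hm
      obtain ⟨⟨h1, h2⟩, hm1⟩ := hN m hm
      have hmpos : (0:ℝ) < (m : ℝ) := Nat.cast_pos.mpr hm1
      have hqpos : (0:ℝ) < (p m : ℝ) := by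
        by_contra h
        push_neg at h
        have h0 : (p m : ℝ) = 0 := le_antisymm h (by positivity)
        rw [h0] at h2; simp at h2
      have hple : (m : ℝ) ≤ (c + 1) * (p m : ℝ) := by
        rw [div_lt_iff₀ hqpos] at h1
        linarith
      rw [div_le_div_iff₀ (by positivity) (by positivity)]
      nlinarith [mul_le_mul_of_nonneg_left hple hmpos.le]
    have hg : Summable (fun m : ℕ => (c + 1) / (m : ℝ) ^ 2) := by
      simpa [div_eq_mul_inv, one_div] using
        (Real.summable_one_div_nat_pow.2 (by norm_num : 1 < 2)).mul_left (c + 1)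
    have h1 : Summable (fun n : ℕ => 1 / (((n + N : ℕ) : ℝ) * ((p (n + N) : ℝ)))) := by
      apply Summable.of_nonneg_of_le (fun n => by positivity)
        (fun n => hbound (n + N) (Nat.le_add_left N n))
      exact (summable_nat_add_iff N).2 hg
    exact (summable_nat_add_iff N).1 h1
  have hZnn : ∀ m : ℕ, 0 ≤ 1 / ((m : ℝ) * (p m : ℝ)) := fun m => by positivity
  -- measurability of Z m
  have hZmeas : ∀ m, Measurable (Z m) := by
    intro m
    apply Measurable.const_mul
    exact Finset.measurable_sum _ (fun i _ => Finset.measurable_sum _ fun j _ => hmeas i j)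
  -- finite total lintegral
  have hlint : ∫⁻ ω, ∑' m, ENNReal.ofReal ((Z m ω) ^ 2) ∂ℙ ≠ ⊤ := by
    rw [lintegral_tsum (fun m => ((hZmeas m).pow_const 2).ennreal_ofReal.aemeasurable)]
    have heq : ∀ m, ∫⁻ ω, ENNReal.ofReal ((Z m ω) ^ 2) ∂ℙ
        = ENNReal.ofReal (1 / (m * (p m : ℝ))) := by
      intro m
      rw [← ofReal_integral_eq_lintegral_ofReal (hZint m)
        (Filter.Eventually.of_forall fun ω => sq_nonneg _), hZsq m]
    simp_rw [heq]
    rw [← ENNReal.ofReal_tsum_of_nonneg hZnn hsummable]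
    exact ENNReal.ofReal_ne_top
  have hae : ∀ᵐ ω, (∑' m, ENNReal.ofReal ((Z m ω) ^ 2)) < ⊤ :=
    ae_lt_top (Measurable.ennreal_tsum
      (fun m => ((hZmeas m).pow_const 2).ennreal_ofReal)) hlint
  filter_upwards [hae] with ω hω
  have h0 : Tendsto (fun m => ENNReal.ofReal ((Z m ω) ^ 2)) atTop (nhds 0) :=
    ENNReal.tendsto_atTop_zero_of_tsum_ne_top hω.ne
  have h1 : Tendsto (fun m => (Z m ω) ^ 2) atTop (nhds 0) := by
    have hcomp := (ENNReal.tendsto_toReal (by simp : (0:ENNReal) ≠ ⊤)).comp h0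
    simp only [Function.comp_def, ENNReal.toReal_zero] at hcomp
    exact hcomp.congr fun m => ENNReal.toReal_ofReal (sq_nonneg _)
  have h2 : Tendsto (fun m => Z m ω) atTop (nhds 0) := by
    rw [tendsto_zero_iff_abs_tendsto_zero]
    have hcomp := (Real.continuous_sqrt.tendsto 0).comp h1
    simp only [Function.comp_def, Real.sqrt_zero] at hcomp
    exact hcomp.congr fun m => Real.sqrt_sq_eq_abs _
  exact h2
end

section
/- Almost surely, (1/(m·p(m)))·Σ_{1 ≤ i ≤ m, 1 ≤ j ≤ p(m)} a_{ij}·e_{ij} → 0 as m → ∞. -/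
open MeasureTheory ProbabilityTheory Filter Matrix

/-- weighted SLLN: almost surely
`(1/(m·p(m))) Σ_{i<m, j<p(m)} a_{ij}·e_{ij} → 0` as `m → ∞`, for deterministic weights with
`(1/(m·p(m))) Σ a_{ij}²` uniformly bounded. -/
theorem stmt14
    {Ω : Type*} [MeasureSpace Ω] [IsProbabilityMeasure (ℙ : Measure Ω)]
    (c : ℝ) (hc : 0 < c)
    (p : ℕ → ℕ)
    (hp : Tendsto (fun m : ℕ => (m : ℝ) / (p m : ℝ)) atTop (nhds c))
    (e : ℕ → ℕ → Ω → ℝ)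
    (hmeas : ∀ i j, Measurable (e i j))
    (hindep : iIndepFun (fun q : ℕ × ℕ => e q.1 q.2) ℙ)
    (hident : ∀ i j, IdentDistrib (e i j) (e 0 0) ℙ ℙ)
    (hint : ∀ i j, Integrable (e i j))
    (hsq : ∀ i j, Integrable (fun ω => (e i j ω) ^ 2))
    (hmean : ∀ i j, ∫ ω, e i j ω = 0)
    (hvar : ∀ i j, ∫ ω, (e i j ω) ^ 2 = 1)
    (a : ℕ → ℕ → ℝ)
    (ha : ∃ C : ℝ, ∀ m : ℕ,
      (1 / (m * p m : ℝ)) * ∑ i : Fin m, ∑ j : Fin (p m), (a i j) ^ 2 ≤ C) :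
    ∀ᵐ ω, Tendsto
      (fun m : ℕ => (1 / (m * p m : ℝ)) * ∑ i : Fin m, ∑ j : Fin (p m), a i j * e i j ω)
      atTop (nhds 0) := by
  classical
  obtain ⟨C₀, hC₀⟩ := ha
  set C : ℝ := max C₀ 0 with hCdef
  have hCnn : 0 ≤ C := le_max_right _ _
  -- notation
  set r : ℕ → ℝ := fun m => 1 / (m * p m : ℝ) with hr
  have hrnn : ∀ m, 0 ≤ r m := by
    intro m
    apply one_div_nonneg.2
    positivity
  set T : ℕ → Finset (ℕ × ℕ) := fun m => Finset.range m ×ˢ Finset.range (p m) with hT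
  set Y : ℕ × ℕ → Ω → ℝ := fun q ω => a q.1 q.2 * e q.1 q.2 ω with hY
  set S : ℕ → Ω → ℝ := fun m ω => ∑ q ∈ T m, Y q ω with hS
  set X : ℕ → Ω → ℝ := fun m ω => r m * S m ω with hX
  -- rewriting the double (Fin) sum as a sum over a product finset
  have hsum_eq : ∀ (f : ℕ → ℕ → ℝ) (m : ℕ),
      ∑ q ∈ T m, f q.1 q.2 = ∑ i : Fin m, ∑ j : Fin (p m), f i j := by
    intro f m
    rw [hT, Finset.sum_product,
      ← Fin.sum_univ_eq_sum_range (fun i => ∑ j ∈ Finset.range (p m), f i j) m]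
    exact Finset.sum_congr rfl fun i _ => (Fin.sum_univ_eq_sum_range (fun j => f i j) (p m)).symm
  have hXeq : ∀ m ω,
      (1 / (m * p m : ℝ)) * ∑ i : Fin m, ∑ j : Fin (p m), a i j * e i j ω = X m ω := by
    intro m ω
    have h := hsum_eq (fun i j => a i j * e i j ω) m
    simp only [hX, hS, hY, hr, hT]
    simp only [hT] at h
    rw [← h]
  -- basic properties of the summands
  have hYmeas : ∀ q, Measurable (Y q) := fun q => (hmeas q.1 q.2).const_mul _
  have hemem : ∀ i j, MemLp (e i j) 2 ℙ := fun i j =>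
    (memLp_two_iff_integrable_sq (hmeas i j).aestronglyMeasurable).mpr (hsq i j)
  have hYmem : ∀ q, MemLp (Y q) 2 ℙ := fun q => (hemem q.1 q.2).const_mul _
  have hYint : ∀ q, Integrable (Y q) := fun q => (hint q.1 q.2).const_mul _
  have hYvar : ∀ q, variance (Y q) ℙ = a q.1 q.2 ^ 2 := by
    intro q
    have he : variance (e q.1 q.2) ℙ = 1 := by
      rw [variance_eq_sub (hemem q.1 q.2)]
      have h1 : (ℙ : Measure Ω)[(e q.1 q.2) ^ 2] = 1 := by
        have := hvar q.1 q.2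
        simpa [Pi.pow_apply] using this
      rw [h1, hmean q.1 q.2]
      ring
    calc variance (Y q) ℙ = a q.1 q.2 ^ 2 * variance (e q.1 q.2) ℙ :=
          variance_const_mul (a q.1 q.2) (e q.1 q.2) ℙ
      _ = a q.1 q.2 ^ 2 := by rw [he, mul_one]
  have hpair : ∀ m, Set.Pairwise ↑(T m) fun q q' => IndepFun (Y q) (Y q') ℙ := by
    intro m q _ q' _ hqq'
    exact (hindep.indepFun hqq').comp (measurable_const_mul (a q.1 q.2))
      (measurable_const_mul (a q'.1 q'.2))
  have hSmem : ∀ m, MemLp (S m) 2 ℙ := fun m =>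
    memLp_finset_sum (T m) (fun q _ => hYmem q)
  have hSmeas : ∀ m, Measurable (S m) := fun m =>
    Finset.measurable_sum _ (fun q _ => hYmeas q)
  -- the second moment of S m
  have hSmean : ∀ m, ∫ ω, S m ω = 0 := by
    intro m
    rw [hS]
    simp only
    rw [integral_finset_sum _ (fun q _ => hYint q)]
    refine Finset.sum_eq_zero fun q _ => ?_
    rw [hY]
    simp only
    rw [integral_const_mul, hmean, mul_zero]
  have hSvar : ∀ m, variance (S m) ℙ = ∑ q ∈ T m, a q.1 q.2 ^ 2 := by
    intro m
    have : variance (∑ q ∈ T m, Y q) ℙ = ∑ q ∈ T m, variance (Y q) ℙ :=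
      IndepFun.variance_sum (fun q _ => hYmem q) (hpair m)
    have hfun : S m = ∑ q ∈ T m, Y q := by
      funext ω; rw [hS]; simp [Finset.sum_apply]
    rw [hfun, this]
    exact Finset.sum_congr rfl fun q _ => hYvar q
  have hS2 : ∀ m, ∫ ω, (S m ω) ^ 2 = ∑ q ∈ T m, a q.1 q.2 ^ 2 := by
    intro m
    have h := variance_eq_sub (hSmem m)
    have h2 : (ℙ : Measure Ω)[S m ^ 2] = ∫ ω, (S m ω) ^ 2 := by
      simp [Pi.pow_apply]
    rw [h2] at h
    rw [hSmean m] at h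
    rw [hSvar m] at h
    linarith [h]
  -- second moment of X m, with bound
  have hXint : ∀ m, Integrable (fun ω => (X m ω) ^ 2) := by
    intro m
    have hS2int : Integrable (fun ω => (S m ω) ^ 2) :=
      (memLp_two_iff_integrable_sq (hSmeas m).aestronglyMeasurable).mp (hSmem m)
    have : (fun ω => (X m ω) ^ 2) = fun ω => (r m) ^ 2 * (S m ω) ^ 2 := by
      funext ω; rw [hX]; ring
    rw [this]
    exact hS2int.const_mul _
  set b : ℕ → ℝ := fun m => ∫ ω, (X m ω) ^ 2 with hb
  have hbnn : ∀ m, 0 ≤ b m := fun m => integral_nonneg fun ω => sq_nonneg _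
  have hbval : ∀ m, b m = (r m) ^ 2 * ∑ q ∈ T m, a q.1 q.2 ^ 2 := by
    intro m
    rw [hb]
    simp only
    have : (fun ω => (X m ω) ^ 2) = fun ω => (r m) ^ 2 * (S m ω) ^ 2 := by
      funext ω; rw [hX]; ring
    rw [this, integral_const_mul, hS2 m]
  have hble : ∀ m, b m ≤ C * r m := by
    intro m
    rw [hbval m]
    have hsa : r m * ∑ q ∈ T m, a q.1 q.2 ^ 2 ≤ C := by
      have := hC₀ m
      rw [← hsum_eq (fun i j => a i j ^ 2) m] at this
      exact le_trans this (le_max_left _ _)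
    calc (r m) ^ 2 * ∑ q ∈ T m, a q.1 q.2 ^ 2
        = r m * (r m * ∑ q ∈ T m, a q.1 q.2 ^ 2) := by ring
      _ ≤ r m * C := mul_le_mul_of_nonneg_left hsa (hrnn m)
      _ = C * r m := mul_comm _ _
  -- eventual bound on r m
  have hev : ∀ᶠ m : ℕ in atTop, r m ≤ (c + 1) / (m : ℝ) ^ 2 := by
    have h1 : ∀ᶠ m : ℕ in atTop, (m : ℝ) / (p m : ℝ) < c + 1 :=
      hp.eventually (gt_mem_nhds (lt_add_one c))
    have h2 : ∀ᶠ m : ℕ in atTop, c / 2 < (m : ℝ) / (p m : ℝ) :=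
      hp.eventually (lt_mem_nhds (half_lt_self hc))
    have h3 : ∀ᶠ m : ℕ in atTop, 1 ≤ m := eventually_ge_atTop 1
    filter_upwards [h1, h2, h3] with m hm1 hm2 hm3
    have hmpos : (0 : ℝ) < m := by exact_mod_cast hm3
    have hppos : (0 : ℝ) < p m := by
      by_contra h
      push_neg at h
      have hp0 : (p m : ℝ) = 0 := le_antisymm h (Nat.cast_nonneg _)
      rw [hp0, div_zero] at hm2
      linarith
    have hmlt : (m : ℝ) < (c + 1) * p m := by
      rw [div_lt_iff₀ hppos] at hm1
      exact hm1
    rw [hr]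
    simp only
    rw [div_le_div_iff₀ (by positivity) (by positivity)]
    calc (1 : ℝ) * (m : ℝ) ^ 2 = (m : ℝ) * (m : ℝ) := by ring
      _ ≤ ((c + 1) * p m) * m := by
          apply mul_le_mul_of_nonneg_right (le_of_lt hmlt) (le_of_lt hmpos)
      _ = (c + 1) * ((m : ℝ) * (p m : ℝ)) := by ring
  -- summability of b
  have hbsum : Summable b := by
    apply Summable.of_norm_bounded_eventually_nat
      (g := fun m => C * (c + 1) * (1 / (m : ℝ) ^ 2))
    · exact (Real.summable_one_div_nat_pow.mpr one_lt_two).mul_left _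
    · filter_upwards [hev] with m hm
      rw [Real.norm_eq_abs, abs_of_nonneg (hbnn m)]
      calc b m ≤ C * r m := hble m
        _ ≤ C * ((c + 1) / (m : ℝ) ^ 2) := mul_le_mul_of_nonneg_left hm hCnn
        _ = C * (c + 1) * (1 / (m : ℝ) ^ 2) := by ring
  -- pass to lintegral
  have hXmeas : ∀ m, Measurable (X m) := fun m => (hSmeas m).const_mul _
  have hlin : ∀ m, ∫⁻ ω, ENNReal.ofReal ((X m ω) ^ 2) ∂ℙ = ENNReal.ofReal (b m) := by
    intro m
    rw [← ofReal_integral_eq_lintegral_ofReal (hXint m)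
      (ae_of_all _ fun ω => sq_nonneg _)]
  have htsum : ∫⁻ ω, ∑' m, ENNReal.ofReal ((X m ω) ^ 2) ∂ℙ ≠ ⊤ := by
    rw [lintegral_tsum (f := fun m ω => ENNReal.ofReal ((X m ω) ^ 2)) fun m =>
      (((hXmeas m).pow_const 2).ennreal_ofReal).aemeasurable]
    have : ∑' m, ∫⁻ ω, ENNReal.ofReal ((X m ω) ^ 2) ∂ℙ
        = ENNReal.ofReal (∑' m, b m) := by
      rw [ENNReal.ofReal_tsum_of_nonneg hbnn hbsum]
      exact tsum_congr hlin
    rw [this]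
    exact ENNReal.ofReal_ne_top
  have hae : ∀ᵐ ω, (∑' m, ENNReal.ofReal ((X m ω) ^ 2)) < ⊤ := by
    apply ae_lt_top _ htsum
    exact Measurable.ennreal_tsum fun m => ((hXmeas m).pow_const 2).ennreal_ofReal
  -- conclude
  filter_upwards [hae] with ω hω
  have h1 : Tendsto (fun m => ENNReal.ofReal ((X m ω) ^ 2)) atTop (nhds 0) :=
    ENNReal.tendsto_atTop_zero_of_tsum_ne_top hω.ne
  have h2 : Tendsto (fun m => (X m ω) ^ 2) atTop (nhds 0) := by
    have h := (ENNReal.tendsto_toReal (by simp : (0 : ENNReal) ≠ ⊤)).comp h1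
    simpa [Function.comp_def, ENNReal.toReal_ofReal (sq_nonneg _)] using h
  have h3 : Tendsto (fun m => X m ω) atTop (nhds 0) := by
    rw [tendsto_zero_iff_abs_tendsto_zero]
    have h := (Real.continuous_sqrt.tendsto 0).comp h2
    simpa [Function.comp_def, Real.sqrt_sq_eq_abs] using h
  have : (fun m : ℕ => (1 / (m * p m : ℝ)) *
      ∑ i : Fin m, ∑ j : Fin (p m), a i j * e i j ω) = fun m => X m ω :=
    funext fun m => hXeq m ω
  rw [this]
  exact h3
end
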